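/- arXiv:1706.03111 — 3 statements merged into one kernel-verified Lean document; each statement's English description precedes it below -/
import Mathlib

section
/- Let ε > 0, let ψ be a Schwartz function on ℝ satisfying −(ε²/2)ψ''(x) + (x²/2)ψ(x) = λ·ψ(x) for all x and some λ ∈ ℝ, and let φ be any Schwartz function on ℝ. Then Ψ = W^ε_φ[ψ] satisfies the phase-space eigenvalue equation of the Moyal star product H ⋆ Ψ = λΨ for the harmonic oscillator Hamiltonian H(x,p) = (x² + p²)/2, namely: for all (x,p) ∈ ℝ², ((x² + p²)/2)·Ψ(x,p) − (ε²/8)·(∂²Ψ/∂x² + ∂²Ψ/∂p²)(x,p) + (iε/2)·(x·∂Ψ/∂p − p·∂Ψ/∂x)(x,p) = λ·Ψ(x,p). -/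
open MeasureTheory

/-- The semiclassical cross-Wigner transform
`W^ε_g[f](x,p) = (2πε)⁻¹ ∫ e^{−ipy/ε} f(x+y/2) conj(g(x−y/2)) dy`. -/
noncomputable def crossWigner (ε : ℝ) (f g : ℝ → ℂ) (x p : ℝ) : ℂ :=
  ((2 * Real.pi * ε : ℝ) : ℂ)⁻¹ *
    ∫ y : ℝ, Complex.exp (-Complex.I * (p : ℂ) * (y : ℂ) / (ε : ℂ)) *
      f (x + y / 2) * (starRingEnd ℂ) (g (x - y / 2))

namespace CWAux

open Complex SchwartzMap Filter
open scoped FourierTransform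

/-- The exponential kernel. -/
noncomputable def wker (ε p y : ℝ) : ℂ :=
  Complex.exp (-Complex.I * (p : ℂ) * (y : ℂ) / (ε : ℂ))

lemma wker_eq (ε p y : ℝ) :
    wker ε p y = Complex.exp ((-Complex.I * (y : ℂ) / (ε : ℂ)) * (p : ℂ)) := by
  unfold wker; congr 1; ring

lemma norm_wker (ε p y : ℝ) : ‖wker ε p y‖ = 1 := by
  rw [wker, show -Complex.I * (p : ℂ) * (y : ℂ) / (ε : ℂ)
      = ((-(p * y / ε) : ℝ) : ℂ) * Complex.I by push_cast; ring]
  rw [Complex.norm_exp_ofReal_mul_I]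

/-- The integrand of the cross-Wigner transform. -/
noncomputable def wit (ε : ℝ) (f g : ℝ → ℂ) (x p y : ℝ) : ℂ :=
  wker ε p y * f (x + y / 2) * (starRingEnd ℂ) (g (x - y / 2))

lemma wit_def (ε : ℝ) (f g : ℝ → ℂ) (x p y : ℝ) :
    wit ε f g x p y = wker ε p y * f (x + y / 2) * (starRingEnd ℂ) (g (x - y / 2)) := rfl

/-- The (unnormalized) cross-Wigner integral. -/
noncomputable def wJ (ε : ℝ) (f g : ℝ → ℂ) (x p : ℝ) : ℂ :=
  ∫ y : ℝ, wit ε f g x p y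

lemma norm_wit (ε : ℝ) (f g : ℝ → ℂ) (x p y : ℝ) :
    ‖wit ε f g x p y‖ = ‖f (x + y / 2)‖ * ‖g (x - y / 2)‖ := by
  rw [wit_def, norm_mul, norm_mul, norm_wker, one_mul, RCLike.norm_conj]

lemma decay2 (f : 𝓢(ℝ, ℂ)) : ∃ C, 0 ≤ C ∧ ∀ t : ℝ, ‖f t‖ * (1 + t ^ 2) ≤ C := by
  obtain ⟨C0, hC0, h0⟩ := f.decay 0 0
  obtain ⟨C2, hC2, h2⟩ := f.decay 2 0
  refine ⟨C0 + C2, by positivity, fun t => ?_⟩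
  have h0t := h0 t
  have h2t := h2 t
  simp only [norm_iteratedFDeriv_zero, pow_zero, one_mul, Real.norm_eq_abs] at h0t h2t
  have habs : |t| ^ 2 = t ^ 2 := _root_.sq_abs t
  nlinarith [norm_nonneg (f t)]

lemma decay4 (f : 𝓢(ℝ, ℂ)) : ∃ C, 0 ≤ C ∧ ∀ t : ℝ, ‖f t‖ * (1 + t ^ 2) ^ 2 ≤ C := by
  obtain ⟨C0, hC0, h0⟩ := f.decay 0 0
  obtain ⟨C2, hC2, h2⟩ := f.decay 2 0
  obtain ⟨C4, hC4, h4⟩ := f.decay 4 0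
  refine ⟨C0 + 2 * C2 + C4, by positivity, fun t => ?_⟩
  have h0t := h0 t
  have h2t := h2 t
  have h4t := h4 t
  simp only [norm_iteratedFDeriv_zero, pow_zero, one_mul, Real.norm_eq_abs] at h0t h2t h4t
  have habs2 : |t| ^ 2 = t ^ 2 := _root_.sq_abs t
  have habs4 : |t| ^ 4 = t ^ 4 := by
    rw [show (4 : ℕ) = 2 * 2 from rfl, pow_mul, pow_mul, _root_.sq_abs]
  nlinarith [norm_nonneg (f t)]

lemma key_bound (f g : 𝓢(ℝ, ℂ)) (x₀ : ℝ) :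
    ∃ C, 0 ≤ C ∧ ∀ x ∈ Metric.ball x₀ 1, ∀ y : ℝ,
      (1 + y ^ 2) * (‖f (x + y / 2)‖ * ‖g (x - y / 2)‖)
        ≤ C * (1 + (x₀ - y / 2) ^ 2)⁻¹ := by
  obtain ⟨Cf, hCf0, hCf⟩ := decay2 f
  obtain ⟨Dg, hDg0, hDg⟩ := decay4 g
  refine ⟨12 * Cf * Dg, by positivity, fun x hx y => ?_⟩
  set u : ℝ := x + y / 2 with hu
  set v : ℝ := x - y / 2 with hv
  set w : ℝ := x₀ - y / 2 with hw
  have hxx : |x - x₀| < 1 := by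
    rw [Metric.mem_ball, Real.dist_eq] at hx; exact hx
  have hvw : (v - w) ^ 2 ≤ 1 := by
    have hveq : v - w = x - x₀ := by rw [hv, hw]; ring
    rw [hveq, ← _root_.sq_abs]
    nlinarith [abs_nonneg (x - x₀)]
  have hy3 : 1 + y ^ 2 ≤ 3 * ((1 + u ^ 2) * (1 + v ^ 2)) := by
    have hyuv : y = u - v := by rw [hu, hv]; ring
    rw [hyuv]
    nlinarith [sq_nonneg (u + v), sq_nonneg (u * v), sq_nonneg u, sq_nonneg v]
  have hw4 : 1 + w ^ 2 ≤ 4 * (1 + v ^ 2) := by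
    nlinarith [hvw, sq_nonneg (v + w), sq_nonneg v]
  have hposw : (0 : ℝ) < 1 + w ^ 2 := by positivity
  rw [← div_eq_mul_inv, le_div_iff₀ hposw]
  have h3 : (1 + y ^ 2) * (‖f u‖ * ‖g v‖) * (1 + w ^ 2)
      ≤ (3 * ((1 + u ^ 2) * (1 + v ^ 2))) * (‖f u‖ * ‖g v‖) * (4 * (1 + v ^ 2)) := by
    have hnn : (0 : ℝ) ≤ ‖f u‖ * ‖g v‖ := by positivity
    have h1 : (1 + y ^ 2) * (‖f u‖ * ‖g v‖) ≤ (3 * ((1 + u ^ 2) * (1 + v ^ 2))) * (‖f u‖ * ‖g v‖) :=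
      mul_le_mul_of_nonneg_right hy3 hnn
    have h2 : (0 : ℝ) ≤ (3 * ((1 + u ^ 2) * (1 + v ^ 2))) * (‖f u‖ * ‖g v‖) := by positivity
    calc (1 + y ^ 2) * (‖f u‖ * ‖g v‖) * (1 + w ^ 2)
        ≤ (3 * ((1 + u ^ 2) * (1 + v ^ 2))) * (‖f u‖ * ‖g v‖) * (1 + w ^ 2) :=
          mul_le_mul_of_nonneg_right h1 (le_of_lt hposw)
      _ ≤ (3 * ((1 + u ^ 2) * (1 + v ^ 2))) * (‖f u‖ * ‖g v‖) * (4 * (1 + v ^ 2)) :=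
          mul_le_mul_of_nonneg_left hw4 h2
  have h4 : (3 * ((1 + u ^ 2) * (1 + v ^ 2))) * (‖f u‖ * ‖g v‖) * (4 * (1 + v ^ 2))
      = 12 * ((‖f u‖ * (1 + u ^ 2)) * (‖g v‖ * (1 + v ^ 2) ^ 2)) := by ring
  have h5 : (‖f u‖ * (1 + u ^ 2)) * (‖g v‖ * (1 + v ^ 2) ^ 2) ≤ Cf * Dg :=
    mul_le_mul (hCf u) (hDg v) (by positivity) hCf0
  nlinarith [h3, h5]

lemma integrable_base (x₀ : ℝ) :
    Integrable (fun y : ℝ => (1 + (x₀ - y / 2) ^ 2)⁻¹) := by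
  have h1 : Integrable (fun t : ℝ => (1 + t ^ 2)⁻¹) := integrable_inv_one_add_sq
  have h2 : Integrable (fun t : ℝ => (1 + (x₀ - t) ^ 2)⁻¹) := h1.comp_sub_left x₀
  exact h2.comp_div (by norm_num : (2 : ℝ) ≠ 0)

lemma integrable_dom (f g : 𝓢(ℝ, ℂ)) (x : ℝ) {F : ℝ → ℂ}
    (hm : AEStronglyMeasurable F volume)
    (hb : ∀ y : ℝ, ‖F y‖ ≤ (1 + y ^ 2) * (‖f (x + y / 2)‖ * ‖g (x - y / 2)‖)) :
    Integrable F := by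
  obtain ⟨C, hC0, hC⟩ := key_bound f g x
  refine Integrable.mono' ((integrable_base x).const_mul C) hm
    (Filter.Eventually.of_forall fun y => ?_)
  exact (hb y).trans (hC x (Metric.mem_ball_self one_pos) y)

lemma cont_wit (ε : ℝ) (f g : 𝓢(ℝ, ℂ)) (x p : ℝ) :
    Continuous fun y : ℝ => wit ε (⇑f) (⇑g) x p y := by
  unfold wit wker
  apply Continuous.mul
  apply Continuous.mul
  · exact Complex.continuous_exp.comp (by fun_prop)
  · exact f.continuous.comp (by fun_prop)
  · exact Complex.continuous_conj.comp (g.continuous.comp (by fun_prop))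

lemma one_le_one_add_sq (y : ℝ) : (1 : ℝ) ≤ 1 + y ^ 2 := by nlinarith [sq_nonneg y]

lemma integrable_wit (ε x p : ℝ) (f g : 𝓢(ℝ, ℂ)) :
    Integrable (fun y : ℝ => wit ε (⇑f) (⇑g) x p y) := by
  refine integrable_dom f g x (cont_wit ε f g x p).aestronglyMeasurable fun y => ?_
  rw [norm_wit]
  exact le_mul_of_one_le_left (by positivity) (one_le_one_add_sq y)

lemma cont_pow_wit (ε : ℝ) (f g : 𝓢(ℝ, ℂ)) (x p : ℝ) (k : ℕ) :
    Continuous fun y : ℝ => (y : ℂ) ^ k * wit ε (⇑f) (⇑g) x p y :=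
  (Complex.continuous_ofReal.pow k).mul (cont_wit ε f g x p)

lemma abs_pow_le (y : ℝ) {k : ℕ} (hk : k ≤ 2) : |y| ^ k ≤ 1 + y ^ 2 := by
  interval_cases k
  · simpa using one_le_one_add_sq y
  · have h1 : |y| ^ 1 = |y| := pow_one _
    rw [h1]
    nlinarith [_root_.sq_abs y, abs_nonneg y]
  · rw [_root_.sq_abs]
    nlinarith [sq_nonneg y]

lemma integrable_pow_wit (ε x p : ℝ) (f g : 𝓢(ℝ, ℂ)) {k : ℕ} (hk : k ≤ 2) :
    Integrable (fun y : ℝ => (y : ℂ) ^ k * wit ε (⇑f) (⇑g) x p y) := by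
  refine integrable_dom f g x (cont_pow_wit ε f g x p k).aestronglyMeasurable fun y => ?_
  rw [norm_mul, norm_pow, Complex.norm_real, Real.norm_eq_abs, norm_wit]
  exact mul_le_mul_of_nonneg_right (abs_pow_le y hk) (by positivity)

lemma integrable_noker (f g : 𝓢(ℝ, ℂ)) (x : ℝ) :
    Integrable (fun y : ℝ => f (x + y / 2) * (starRingEnd ℂ) (g (x - y / 2))) := by
  refine integrable_dom f g x ?_ fun y => ?_
  · exact ((f.continuous.comp (by fun_prop)).mul
      (Complex.continuous_conj.comp (g.continuous.comp (by fun_prop)))).aestronglyMeasurable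
  · rw [norm_mul, RCLike.norm_conj]
    exact le_mul_of_one_le_left (by positivity) (one_le_one_add_sq y)

/-- Derivative of the cross-Wigner integral in `x`. -/
lemma hasDerivAt_wJ_x (ε p : ℝ) (f g : 𝓢(ℝ, ℂ)) (x₀ : ℝ) :
    HasDerivAt (fun x : ℝ => wJ ε (⇑f) (⇑g) x p)
      (wJ ε (⇑(derivCLM ℝ ℂ f)) (⇑g) x₀ p + wJ ε (⇑f) (⇑(derivCLM ℝ ℂ g)) x₀ p) x₀ := by
  set Df := derivCLM ℝ ℂ f with hDf
  set Dg := derivCLM ℝ ℂ g with hDg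
  have hDfe : deriv (⇑f) = ⇑Df := by
    funext t; rw [hDf, derivCLM_apply]
  have hDge : deriv (⇑g) = ⇑Dg := by
    funext t; rw [hDg, derivCLM_apply]
  obtain ⟨C₁, hC₁0, hC₁⟩ := key_bound Df g x₀
  obtain ⟨C₂, hC₂0, hC₂⟩ := key_bound f Dg x₀
  have h_bound : ∀ᵐ y : ℝ, ∀ x ∈ Metric.ball x₀ 1,
      ‖wit ε (⇑Df) (⇑g) x p y + wit ε (⇑f) (⇑Dg) x p y‖
        ≤ (C₁ + C₂) * (1 + (x₀ - y / 2) ^ 2)⁻¹ := by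
    refine Filter.Eventually.of_forall fun y => fun x hx => ?_
    have b1 := hC₁ x hx y
    have b2 := hC₂ x hx y
    have n1 : ‖wit ε (⇑Df) (⇑g) x p y‖
        ≤ (1 + y ^ 2) * (‖Df (x + y / 2)‖ * ‖g (x - y / 2)‖) := by
      rw [norm_wit]
      exact le_mul_of_one_le_left (by positivity) (one_le_one_add_sq y)
    have n2 : ‖wit ε (⇑f) (⇑Dg) x p y‖
        ≤ (1 + y ^ 2) * (‖f (x + y / 2)‖ * ‖Dg (x - y / 2)‖) := by
      rw [norm_wit]
      exact le_mul_of_one_le_left (by positivity) (one_le_one_add_sq y)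
    calc ‖wit ε (⇑Df) (⇑g) x p y + wit ε (⇑f) (⇑Dg) x p y‖
        ≤ ‖wit ε (⇑Df) (⇑g) x p y‖ + ‖wit ε (⇑f) (⇑Dg) x p y‖ := norm_add_le _ _
      _ ≤ C₁ * (1 + (x₀ - y / 2) ^ 2)⁻¹ + C₂ * (1 + (x₀ - y / 2) ^ 2)⁻¹ :=
          add_le_add (n1.trans b1) (n2.trans b2)
      _ = (C₁ + C₂) * (1 + (x₀ - y / 2) ^ 2)⁻¹ := by ring
  have h_diff : ∀ᵐ y : ℝ, ∀ x ∈ Metric.ball x₀ 1,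
      HasDerivAt (fun x : ℝ => wit ε (⇑f) (⇑g) x p y)
        (wit ε (⇑Df) (⇑g) x p y + wit ε (⇑f) (⇑Dg) x p y) x := by
    refine Filter.Eventually.of_forall fun y => fun x hx => ?_
    have hf1 : HasDerivAt (fun x : ℝ => f (x + y / 2)) (deriv (⇑f) (x + y / 2)) x := by
      have hinner : HasDerivAt (fun x : ℝ => x + y / 2) 1 x := (hasDerivAt_id x).add_const _
      have houter : HasDerivAt (⇑f) (deriv (⇑f) (x + y / 2)) (x + y / 2) :=
        (f.differentiable (x + y / 2)).hasDerivAt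
      have h := houter.scomp x hinner; rw [one_smul] at h; exact h
    have hg1 : HasDerivAt (fun x : ℝ => (starRingEnd ℂ) (g (x - y / 2)))
        ((starRingEnd ℂ) (deriv (⇑g) (x - y / 2))) x := by
      have hinner : HasDerivAt (fun x : ℝ => x - y / 2) 1 x := (hasDerivAt_id x).sub_const _
      have houter : HasDerivAt (⇑g) (deriv (⇑g) (x - y / 2)) (x - y / 2) :=
        (g.differentiable (x - y / 2)).hasDerivAt
      have h2 : HasDerivAt (fun x : ℝ => g (x - y / 2)) (deriv (⇑g) (x - y / 2)) x := by
        have h := houter.scomp x hinner; rw [one_smul] at h; exact h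
      simpa only [starRingEnd_apply] using h2.star
    have hmul := (hf1.mul hg1).const_mul (wker ε p y)
    have hval : wit ε (⇑Df) (⇑g) x p y + wit ε (⇑f) (⇑Dg) x p y
        = wker ε p y * (deriv (⇑f) (x + y / 2) * (starRingEnd ℂ) (g (x - y / 2))
            + f (x + y / 2) * (starRingEnd ℂ) (deriv (⇑g) (x - y / 2))) := by
      rw [wit_def, wit_def, hDfe, hDge]; ring
    rw [hval]
    have hfun : (fun x : ℝ => wit ε (⇑f) (⇑g) x p y)
        = fun x : ℝ => wker ε p y * (f (x + y / 2) * (starRingEnd ℂ) (g (x - y / 2))) := by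
      funext x'; rw [wit_def, mul_assoc]
    rw [hfun]
    exact hmul
  have hder := hasDerivAt_integral_of_dominated_loc_of_deriv_le (μ := volume) (x₀ := x₀)
      (F := fun x y => wit ε (⇑f) (⇑g) x p y)
      (F' := fun x y => wit ε (⇑Df) (⇑g) x p y + wit ε (⇑f) (⇑Dg) x p y)
      (bound := fun y => (C₁ + C₂) * (1 + (x₀ - y / 2) ^ 2)⁻¹)
      (Metric.ball_mem_nhds _ one_pos)
      (Filter.Eventually.of_forall fun x => (cont_wit ε f g x p).aestronglyMeasurable)
      (integrable_wit ε x₀ p f g)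
      (((cont_wit ε Df g x₀ p).add (cont_wit ε f Dg x₀ p)).aestronglyMeasurable)
      h_bound
      ((integrable_base x₀).const_mul (C₁ + C₂))
      h_diff
  have h2 := hder.2
  rw [integral_add (integrable_wit ε x₀ p Df g) (integrable_wit ε x₀ p f Dg)] at h2
  exact h2

/-- Derivative of the (polynomially weighted) cross-Wigner integral in `p`. -/
lemma hasDerivAt_wJ_p (ε : ℝ) (hε : 0 < ε) (f g : 𝓢(ℝ, ℂ)) (x p₀ : ℝ) (k : ℕ) (hk : k ≤ 1) :
    HasDerivAt (fun p : ℝ => ∫ y : ℝ, (y : ℂ) ^ k * wit ε (⇑f) (⇑g) x p y)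
      ((-Complex.I / ε) * ∫ y : ℝ, (y : ℂ) ^ (k + 1) * wit ε (⇑f) (⇑g) x p₀ y) p₀ := by
  obtain ⟨C, hC0, hC⟩ := key_bound f g x
  have hk2 : k ≤ 2 := hk.trans (by norm_num)
  have hk12 : k + 1 ≤ 2 := by omega
  have h_bound : ∀ᵐ y : ℝ, ∀ p ∈ Metric.ball p₀ 1,
      ‖(-Complex.I / (ε : ℂ)) * ((y : ℂ) ^ (k + 1) * wit ε (⇑f) (⇑g) x p y)‖
        ≤ ε⁻¹ * (C * (1 + (x - y / 2) ^ 2)⁻¹) := by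
    refine Filter.Eventually.of_forall fun y => fun p hp => ?_
    have e1 : ‖(-Complex.I / (ε : ℂ)) * ((y : ℂ) ^ (k + 1) * wit ε (⇑f) (⇑g) x p y)‖
        = ε⁻¹ * (|y| ^ (k + 1) * (‖f (x + y / 2)‖ * ‖g (x - y / 2)‖)) := by
      rw [norm_mul, norm_mul, norm_pow, Complex.norm_real, Real.norm_eq_abs, norm_wit,
        norm_div, norm_neg, Complex.norm_I, Complex.norm_real, Real.norm_eq_abs,
        abs_of_pos hε, one_div]
    rw [e1]
    refine mul_le_mul_of_nonneg_left ?_ (inv_nonneg.mpr hε.le)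
    refine le_trans ?_ (hC x (Metric.mem_ball_self one_pos) y)
    exact mul_le_mul_of_nonneg_right (abs_pow_le y hk12) (by positivity)
  have h_diff : ∀ᵐ y : ℝ, ∀ p ∈ Metric.ball p₀ 1,
      HasDerivAt (fun p : ℝ => (y : ℂ) ^ k * wit ε (⇑f) (⇑g) x p y)
        ((-Complex.I / (ε : ℂ)) * ((y : ℂ) ^ (k + 1) * wit ε (⇑f) (⇑g) x p y)) p := by
    refine Filter.Eventually.of_forall fun y => fun p hp => ?_
    have h1 : HasDerivAt (fun q : ℝ => ((q : ℂ))) 1 p := by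
      simpa using (hasDerivAt_id p).ofReal_comp
    have h2 : HasDerivAt (fun q : ℝ => (-Complex.I * (y : ℂ) / (ε : ℂ)) * (q : ℂ))
        ((-Complex.I * (y : ℂ) / (ε : ℂ)) * 1) p := h1.const_mul _
    have h3 := h2.cexp
    simp only [← wker_eq] at h3
    have h5 := ((h3.mul_const (f (x + y / 2))).mul_const
        ((starRingEnd ℂ) (g (x - y / 2)))).const_mul ((y : ℂ) ^ k)
    have hval : (-Complex.I / (ε : ℂ)) * ((y : ℂ) ^ (k + 1) * wit ε (⇑f) (⇑g) x p y)
        = (y : ℂ) ^ k * (wker ε p y * (-Complex.I * (y : ℂ) / (ε : ℂ) * 1)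
            * f (x + y / 2) * (starRingEnd ℂ) (g (x - y / 2))) := by
      rw [wit_def]; ring
    rw [hval]
    exact h5
  have hder := hasDerivAt_integral_of_dominated_loc_of_deriv_le (μ := volume) (x₀ := p₀)
      (F := fun p y => (y : ℂ) ^ k * wit ε (⇑f) (⇑g) x p y)
      (F' := fun p y => (-Complex.I / (ε : ℂ)) * ((y : ℂ) ^ (k + 1) * wit ε (⇑f) (⇑g) x p y))
      (bound := fun y => ε⁻¹ * (C * (1 + (x - y / 2) ^ 2)⁻¹))
      (Metric.ball_mem_nhds _ one_pos)
      (Filter.Eventually.of_forall fun p => (cont_pow_wit ε f g x p k).aestronglyMeasurable)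
      (integrable_pow_wit ε x p₀ f g hk2)
      ((continuous_const.mul (cont_pow_wit ε f g x p₀ (k + 1))).aestronglyMeasurable)
      h_bound
      (((integrable_base x).const_mul C).const_mul ε⁻¹)
      h_diff
  have h2 := hder.2
  rw [integral_const_mul] at h2
  exact h2


/-- Integration by parts identity for the cross-Wigner integral. -/
lemma ibp (ε : ℝ) (hε : 0 < ε) (f g : 𝓢(ℝ, ℂ)) (x p : ℝ) :
    Complex.I * (p : ℂ) / (ε : ℂ) * wJ ε (⇑f) (⇑g) x p
      = (2 : ℂ)⁻¹ * wJ ε (⇑(derivCLM ℝ ℂ f)) (⇑g) x p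
        - (2 : ℂ)⁻¹ * wJ ε (⇑f) (⇑(derivCLM ℝ ℂ g)) x p := by
  set Df := derivCLM ℝ ℂ f with hDf
  set Dg := derivCLM ℝ ℂ g with hDg
  have hDfe : deriv (⇑f) = ⇑Df := by
    funext t; rw [hDf, derivCLM_apply]
  have hDge : deriv (⇑g) = ⇑Dg := by
    funext t; rw [hDg, derivCLM_apply]
  set h : ℝ → ℂ := fun y => f (x + y / 2) * (starRingEnd ℂ) (g (x - y / 2)) with hh
  have hd : ∀ y : ℝ, HasDerivAt h
      ((2 : ℂ)⁻¹ * (Df (x + y / 2) * (starRingEnd ℂ) (g (x - y / 2)))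
        - (2 : ℂ)⁻¹ * (f (x + y / 2) * (starRingEnd ℂ) (Dg (x - y / 2)))) y := by
    intro y
    have hinner1 : HasDerivAt (fun y : ℝ => x + y / 2) (1 / 2) y := by
      simpa using ((hasDerivAt_id y).div_const 2).const_add x
    have hinner2 : HasDerivAt (fun y : ℝ => x - y / 2) (-(1 / 2)) y := by
      simpa using ((hasDerivAt_id y).div_const 2).const_sub x
    have hf1 : HasDerivAt (fun y : ℝ => f (x + y / 2))
        ((1 / 2 : ℝ) • deriv (⇑f) (x + y / 2)) y := by
      have houter : HasDerivAt (⇑f) (deriv (⇑f) (x + y / 2)) (x + y / 2) :=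
        (f.differentiable (x + y / 2)).hasDerivAt
      exact houter.scomp y hinner1
    have hg1 : HasDerivAt (fun y : ℝ => (starRingEnd ℂ) (g (x - y / 2)))
        ((starRingEnd ℂ) ((-(1 / 2) : ℝ) • deriv (⇑g) (x - y / 2))) y := by
      have houter : HasDerivAt (⇑g) (deriv (⇑g) (x - y / 2)) (x - y / 2) :=
        (g.differentiable (x - y / 2)).hasDerivAt
      have h2 : HasDerivAt (fun y : ℝ => g (x - y / 2))
          ((-(1 / 2) : ℝ) • deriv (⇑g) (x - y / 2)) y := by
        exact houter.scomp y hinner2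
      simpa only [starRingEnd_apply] using h2.star
    have hmul := hf1.mul hg1
    have hval : (2 : ℂ)⁻¹ * (Df (x + y / 2) * (starRingEnd ℂ) (g (x - y / 2)))
          - (2 : ℂ)⁻¹ * (f (x + y / 2) * (starRingEnd ℂ) (Dg (x - y / 2)))
        = ((1 / 2 : ℝ) • deriv (⇑f) (x + y / 2)) * (starRingEnd ℂ) (g (x - y / 2))
          + f (x + y / 2) * (starRingEnd ℂ) ((-(1 / 2) : ℝ) • deriv (⇑g) (x - y / 2)) := by
      rw [hDfe, hDge]
      simp only [starRingEnd_apply, star_smul, star_trivial]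
      simp only [Complex.real_smul]
      push_cast
      ring
    rw [hval]
    exact hmul
  have hdiffh : Differentiable ℝ h := fun y => (hd y).differentiableAt
  have hderivh : deriv h = fun y =>
      (2 : ℂ)⁻¹ * (Df (x + y / 2) * (starRingEnd ℂ) (g (x - y / 2)))
        - (2 : ℂ)⁻¹ * (f (x + y / 2) * (starRingEnd ℂ) (Dg (x - y / 2))) :=
    funext fun y => (hd y).deriv
  have hint : Integrable h := integrable_noker f g x
  have hint' : Integrable (deriv h) := by
    rw [hderivh]
    exact ((integrable_noker Df g x).const_mul _).sub ((integrable_noker f Dg x).const_mul _)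
  have key := congrFun (Real.fourier_deriv hint hdiffh hint') (p / (2 * Real.pi * ε))
  have hker : ∀ F : ℝ → ℂ, 𝓕 F (p / (2 * Real.pi * ε)) = ∫ y : ℝ, wker ε p y * F y := by
    intro F
    rw [Real.fourier_real_eq_integral_exp_smul]
    refine integral_congr_ae (Filter.Eventually.of_forall fun y => ?_)
    simp only []
    rw [smul_eq_mul]
    congr 1
    rw [wker_eq]
    congr 1
    have hr : -2 * Real.pi * y * (p / (2 * Real.pi * ε)) = -(p * y / ε) := by
      field_simp
    rw [show ((-2 * Real.pi * y * (p / (2 * Real.pi * ε)) : ℝ) : ℂ)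
        = ((-(p * y / ε) : ℝ) : ℂ) from by rw [hr]]
    push_cast
    ring
  have keyL : 𝓕 (deriv h) (p / (2 * Real.pi * ε))
      = (2 : ℂ)⁻¹ * wJ ε (⇑Df) (⇑g) x p - (2 : ℂ)⁻¹ * wJ ε (⇑f) (⇑Dg) x p := by
    rw [hker]
    have hpt : ∀ y : ℝ, wker ε p y * deriv h y
        = (2 : ℂ)⁻¹ * wit ε (⇑Df) (⇑g) x p y - (2 : ℂ)⁻¹ * wit ε (⇑f) (⇑Dg) x p y := by
      intro y
      rw [hderivh, wit_def, wit_def]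
      ring
    rw [integral_congr_ae (Filter.Eventually.of_forall hpt),
      integral_sub ((integrable_wit ε x p Df g).const_mul _)
        ((integrable_wit ε x p f Dg).const_mul _),
      integral_const_mul, integral_const_mul]
    rfl
  have keyR : 𝓕 h (p / (2 * Real.pi * ε)) = wJ ε (⇑f) (⇑g) x p := by
    rw [hker]
    refine integral_congr_ae (Filter.Eventually.of_forall fun y => ?_)
    rw [wit_def, mul_assoc]
  rw [keyL, keyR, smul_eq_mul] at key
  have hcoef : (2 * (Real.pi : ℂ) * Complex.I * ((p / (2 * Real.pi * ε) : ℝ) : ℂ))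
      = Complex.I * (p : ℂ) / (ε : ℂ) := by
    have hpi : (Real.pi : ℂ) ≠ 0 := Complex.ofReal_ne_zero.mpr Real.pi_ne_zero
    have hεne : (ε : ℂ) ≠ 0 := Complex.ofReal_ne_zero.mpr (ne_of_gt hε)
    push_cast
    field_simp
  rw [hcoef] at key
  exact key.symm

/-- The pointwise eigenvalue equation integrated against the Wigner kernel. -/
lemma eig (ε : ℝ) (hε : 0 < ε) (ψ φ : 𝓢(ℝ, ℂ)) (lam : ℝ)
    (hψ : ∀ t : ℝ, -((ε : ℂ) ^ 2 / 2) * iteratedDeriv 2 (⇑ψ) t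
        + ((t : ℂ) ^ 2 / 2) * ψ t = (lam : ℂ) * ψ t) (x p : ℝ) :
    -((ε : ℂ) ^ 2 / 2) * wJ ε (⇑(derivCLM ℝ ℂ (derivCLM ℝ ℂ ψ))) (⇑φ) x p
      + ((x : ℂ) ^ 2 / 2) * wJ ε (⇑ψ) (⇑φ) x p
      + ((x : ℂ) / 2) * (∫ y : ℝ, (y : ℂ) ^ 1 * wit ε (⇑ψ) (⇑φ) x p y)
      + (8 : ℂ)⁻¹ * (∫ y : ℝ, (y : ℂ) ^ 2 * wit ε (⇑ψ) (⇑φ) x p y)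
      = (lam : ℂ) * wJ ε (⇑ψ) (⇑φ) x p := by
  set DDψ := derivCLM ℝ ℂ (derivCLM ℝ ℂ ψ) with hDDψ
  have hDD : iteratedDeriv 2 (⇑ψ) = ⇑DDψ := by
    funext t
    rw [show (2 : ℕ) = 1 + 1 from rfl, iteratedDeriv_succ, iteratedDeriv_one]
    have hψ1 : deriv (⇑ψ) = ⇑(derivCLM ℝ ℂ ψ) := by
      funext s; rw [derivCLM_apply]
    rw [hψ1, hDDψ, derivCLM_apply]
  have hpt : ∀ y : ℝ, (lam : ℂ) * wit ε (⇑ψ) (⇑φ) x p y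
      = -((ε : ℂ) ^ 2 / 2) * wit ε (⇑DDψ) (⇑φ) x p y
        + ((x : ℂ) ^ 2 / 2) * wit ε (⇑ψ) (⇑φ) x p y
        + ((x : ℂ) / 2) * ((y : ℂ) ^ 1 * wit ε (⇑ψ) (⇑φ) x p y)
        + (8 : ℂ)⁻¹ * ((y : ℂ) ^ 2 * wit ε (⇑ψ) (⇑φ) x p y) := by
    intro y
    have h1 := hψ (x + y / 2)
    rw [hDD] at h1
    push_cast at h1
    simp only [wit_def]
    linear_combination (-(wker ε p y * (starRingEnd ℂ) (φ (x - y / 2)))) * h1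
  have iA : Integrable (fun y : ℝ => -((ε : ℂ) ^ 2 / 2) * wit ε (⇑DDψ) (⇑φ) x p y) :=
    (integrable_wit ε x p DDψ φ).const_mul _
  have iB : Integrable (fun y : ℝ => ((x : ℂ) ^ 2 / 2) * wit ε (⇑ψ) (⇑φ) x p y) :=
    (integrable_wit ε x p ψ φ).const_mul _
  have iC : Integrable (fun y : ℝ => ((x : ℂ) / 2) * ((y : ℂ) ^ 1 * wit ε (⇑ψ) (⇑φ) x p y)) :=
    (integrable_pow_wit ε x p ψ φ (by norm_num)).const_mul _
  have iD : Integrable (fun y : ℝ => (8 : ℂ)⁻¹ * ((y : ℂ) ^ 2 * wit ε (⇑ψ) (⇑φ) x p y)) :=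
    (integrable_pow_wit ε x p ψ φ (by norm_num)).const_mul _
  have step : (lam : ℂ) * wJ ε (⇑ψ) (⇑φ) x p = ∫ y : ℝ,
      (-((ε : ℂ) ^ 2 / 2) * wit ε (⇑DDψ) (⇑φ) x p y
        + ((x : ℂ) ^ 2 / 2) * wit ε (⇑ψ) (⇑φ) x p y
        + ((x : ℂ) / 2) * ((y : ℂ) ^ 1 * wit ε (⇑ψ) (⇑φ) x p y)
        + (8 : ℂ)⁻¹ * ((y : ℂ) ^ 2 * wit ε (⇑ψ) (⇑φ) x p y)) := by
    rw [wJ, ← integral_const_mul]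
    exact integral_congr_ae (Filter.Eventually.of_forall hpt)
  have iAB : Integrable (fun y : ℝ => -((ε : ℂ) ^ 2 / 2) * wit ε (⇑DDψ) (⇑φ) x p y
      + ((x : ℂ) ^ 2 / 2) * wit ε (⇑ψ) (⇑φ) x p y) := iA.add iB
  have iABC : Integrable (fun y : ℝ => -((ε : ℂ) ^ 2 / 2) * wit ε (⇑DDψ) (⇑φ) x p y
      + ((x : ℂ) ^ 2 / 2) * wit ε (⇑ψ) (⇑φ) x p y
      + ((x : ℂ) / 2) * ((y : ℂ) ^ 1 * wit ε (⇑ψ) (⇑φ) x p y)) := iAB.add iC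
  have s1 : (∫ y : ℝ, (-((ε : ℂ) ^ 2 / 2) * wit ε (⇑DDψ) (⇑φ) x p y
        + ((x : ℂ) ^ 2 / 2) * wit ε (⇑ψ) (⇑φ) x p y))
      = (∫ y : ℝ, -((ε : ℂ) ^ 2 / 2) * wit ε (⇑DDψ) (⇑φ) x p y)
        + ∫ y : ℝ, ((x : ℂ) ^ 2 / 2) * wit ε (⇑ψ) (⇑φ) x p y := integral_add iA iB
  have s2 : (∫ y : ℝ, (-((ε : ℂ) ^ 2 / 2) * wit ε (⇑DDψ) (⇑φ) x p y
        + ((x : ℂ) ^ 2 / 2) * wit ε (⇑ψ) (⇑φ) x p y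
        + ((x : ℂ) / 2) * ((y : ℂ) ^ 1 * wit ε (⇑ψ) (⇑φ) x p y)))
      = (∫ y : ℝ, (-((ε : ℂ) ^ 2 / 2) * wit ε (⇑DDψ) (⇑φ) x p y
          + ((x : ℂ) ^ 2 / 2) * wit ε (⇑ψ) (⇑φ) x p y))
        + ∫ y : ℝ, ((x : ℂ) / 2) * ((y : ℂ) ^ 1 * wit ε (⇑ψ) (⇑φ) x p y) :=
    integral_add iAB iC
  have s3 : (∫ y : ℝ, (-((ε : ℂ) ^ 2 / 2) * wit ε (⇑DDψ) (⇑φ) x p y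
        + ((x : ℂ) ^ 2 / 2) * wit ε (⇑ψ) (⇑φ) x p y
        + ((x : ℂ) / 2) * ((y : ℂ) ^ 1 * wit ε (⇑ψ) (⇑φ) x p y)
        + (8 : ℂ)⁻¹ * ((y : ℂ) ^ 2 * wit ε (⇑ψ) (⇑φ) x p y)))
      = (∫ y : ℝ, (-((ε : ℂ) ^ 2 / 2) * wit ε (⇑DDψ) (⇑φ) x p y
          + ((x : ℂ) ^ 2 / 2) * wit ε (⇑ψ) (⇑φ) x p y
          + ((x : ℂ) / 2) * ((y : ℂ) ^ 1 * wit ε (⇑ψ) (⇑φ) x p y)))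
        + ∫ y : ℝ, (8 : ℂ)⁻¹ * ((y : ℂ) ^ 2 * wit ε (⇑ψ) (⇑φ) x p y) :=
    integral_add iABC iD
  rw [step, s3, s2, s1, integral_const_mul, integral_const_mul, integral_const_mul,
    integral_const_mul]
  rfl

end CWAux

/-- If `ψ` is a Schwartz eigenfunction of the harmonic oscillator
`−(ε²/2)ψ'' + (x²/2)ψ = λψ` and `φ` is any Schwartz function, then `Ψ = W^ε_φ[ψ]`
satisfies the left Moyal star eigenvalue equation `H ⋆ Ψ = λΨ` for
`H(x,p) = (x²+p²)/2`, written out as an explicit second-order PDE. -/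
theorem crossWigner_star_genvalue_left (ε : ℝ) (hε : 0 < ε)
    (ψ φ : SchwartzMap ℝ ℂ) (lam : ℝ)
    (hψ : ∀ x : ℝ, -((ε : ℂ) ^ 2 / 2) * iteratedDeriv 2 (⇑ψ) x
        + ((x : ℂ) ^ 2 / 2) * ψ x = (lam : ℂ) * ψ x) :
    ∀ x p : ℝ,
      (((x ^ 2 + p ^ 2) / 2 : ℝ) : ℂ) * crossWigner ε (⇑ψ) (⇑φ) x p
        - ((ε : ℂ) ^ 2 / 8) *
            (iteratedDeriv 2 (fun x' : ℝ => crossWigner ε (⇑ψ) (⇑φ) x' p) x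
              + iteratedDeriv 2 (fun p' : ℝ => crossWigner ε (⇑ψ) (⇑φ) x p') p)
        + (Complex.I * (ε : ℂ) / 2) *
            ((x : ℂ) * deriv (fun p' : ℝ => crossWigner ε (⇑ψ) (⇑φ) x p') p
              - (p : ℂ) * deriv (fun x' : ℝ => crossWigner ε (⇑ψ) (⇑φ) x' p) x)
      = (lam : ℂ) * crossWigner ε (⇑ψ) (⇑φ) x p := by
  intro x p
  have hεne : (ε : ℂ) ≠ 0 := Complex.ofReal_ne_zero.mpr (ne_of_gt hε)
  set c : ℂ := ((2 * Real.pi * ε : ℝ) : ℂ)⁻¹ with hc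
  have hcw : ∀ x' p' : ℝ, crossWigner ε (⇑ψ) (⇑φ) x' p'
      = c * CWAux.wJ ε (⇑ψ) (⇑φ) x' p' := fun _ _ => rfl
  -- x-derivatives
  have hDx_fun : (deriv fun x' : ℝ => crossWigner ε (⇑ψ) (⇑φ) x' p)
      = fun x' : ℝ => c * (CWAux.wJ ε (⇑(SchwartzMap.derivCLM ℝ ℂ ψ)) (⇑φ) x' p
          + CWAux.wJ ε (⇑ψ) (⇑(SchwartzMap.derivCLM ℝ ℂ φ)) x' p) := by
    funext x'
    have hfe : (fun t : ℝ => crossWigner ε (⇑ψ) (⇑φ) t p)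
        = fun t : ℝ => c * CWAux.wJ ε (⇑ψ) (⇑φ) t p := funext fun t => hcw t p
    rw [hfe]
    exact ((CWAux.hasDerivAt_wJ_x ε p ψ φ x').const_mul c).deriv
  have hDx : deriv (fun x' : ℝ => crossWigner ε (⇑ψ) (⇑φ) x' p) x
      = c * (CWAux.wJ ε (⇑(SchwartzMap.derivCLM ℝ ℂ ψ)) (⇑φ) x p
          + CWAux.wJ ε (⇑ψ) (⇑(SchwartzMap.derivCLM ℝ ℂ φ)) x p) := by
    rw [hDx_fun]
  have hDxx : iteratedDeriv 2 (fun x' : ℝ => crossWigner ε (⇑ψ) (⇑φ) x' p) x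
      = c * ((CWAux.wJ ε (⇑(SchwartzMap.derivCLM ℝ ℂ (SchwartzMap.derivCLM ℝ ℂ ψ))) (⇑φ) x p
            + CWAux.wJ ε (⇑(SchwartzMap.derivCLM ℝ ℂ ψ)) (⇑(SchwartzMap.derivCLM ℝ ℂ φ)) x p)
          + (CWAux.wJ ε (⇑(SchwartzMap.derivCLM ℝ ℂ ψ)) (⇑(SchwartzMap.derivCLM ℝ ℂ φ)) x p
            + CWAux.wJ ε (⇑ψ) (⇑(SchwartzMap.derivCLM ℝ ℂ (SchwartzMap.derivCLM ℝ ℂ φ))) x p)) := by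
    rw [show (2 : ℕ) = 1 + 1 from rfl, iteratedDeriv_succ, iteratedDeriv_one, hDx_fun]
    exact (((CWAux.hasDerivAt_wJ_x ε p (SchwartzMap.derivCLM ℝ ℂ ψ) φ x).add
      (CWAux.hasDerivAt_wJ_x ε p ψ (SchwartzMap.derivCLM ℝ ℂ φ) x)).const_mul c).deriv
  -- p-derivatives
  have hp0 : ∀ p' : ℝ, HasDerivAt (fun q : ℝ => CWAux.wJ ε (⇑ψ) (⇑φ) x q)
      ((-Complex.I / ε) * ∫ y : ℝ, (y : ℂ) ^ 1 * CWAux.wit ε (⇑ψ) (⇑φ) x p' y) p' := by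
    intro p'
    have h := CWAux.hasDerivAt_wJ_p ε hε ψ φ x p' 0 (by norm_num)
    simp only [pow_zero, one_mul, show (0 + 1 : ℕ) = 1 from rfl] at h
    exact h
  have hDp_fun : (deriv fun p' : ℝ => crossWigner ε (⇑ψ) (⇑φ) x p')
      = fun p' : ℝ => c * ((-Complex.I / ε)
          * ∫ y : ℝ, (y : ℂ) ^ 1 * CWAux.wit ε (⇑ψ) (⇑φ) x p' y) := by
    funext p'
    have hfe : (fun q : ℝ => crossWigner ε (⇑ψ) (⇑φ) x q)
        = fun q : ℝ => c * CWAux.wJ ε (⇑ψ) (⇑φ) x q := funext fun q => hcw x q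
    rw [hfe]
    exact ((hp0 p').const_mul c).deriv
  have hDp : deriv (fun p' : ℝ => crossWigner ε (⇑ψ) (⇑φ) x p') p
      = c * ((-Complex.I / ε) * ∫ y : ℝ, (y : ℂ) ^ 1 * CWAux.wit ε (⇑ψ) (⇑φ) x p y) := by
    rw [hDp_fun]
  have hDpp : iteratedDeriv 2 (fun p' : ℝ => crossWigner ε (⇑ψ) (⇑φ) x p') p
      = c * ((-Complex.I / ε) * ((-Complex.I / ε)
          * ∫ y : ℝ, (y : ℂ) ^ 2 * CWAux.wit ε (⇑ψ) (⇑φ) x p y)) := by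
    rw [show (2 : ℕ) = 1 + 1 from rfl, iteratedDeriv_succ, iteratedDeriv_one, hDp_fun]
    have h := CWAux.hasDerivAt_wJ_p ε hε ψ φ x p 1 (le_refl 1)
    simp only [show (1 + 1 : ℕ) = 2 from rfl] at h
    exact ((h.const_mul (-Complex.I / ε)).const_mul c).deriv
  -- integration by parts identities
  have e_a := CWAux.ibp ε hε ψ φ x p
  have e_b := CWAux.ibp ε hε (SchwartzMap.derivCLM ℝ ℂ ψ) φ x p
  have e_c := CWAux.ibp ε hε ψ (SchwartzMap.derivCLM ℝ ℂ φ) x p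
  have e_eig := CWAux.eig ε hε ψ φ lam hψ x p
  have hew : (ε : ℂ) * ((ε : ℂ))⁻¹ = 1 := mul_inv_cancel₀ hεne
  rw [hcw x p, hDxx, hDpp, hDp, hDx]
  push_cast
  set J00 := CWAux.wJ ε (⇑ψ) (⇑φ) x p with hJ00
  set J10 := CWAux.wJ ε (⇑(SchwartzMap.derivCLM ℝ ℂ ψ)) (⇑φ) x p with hJ10
  set J01 := CWAux.wJ ε (⇑ψ) (⇑(SchwartzMap.derivCLM ℝ ℂ φ)) x p with hJ01
  set J20 := CWAux.wJ ε (⇑(SchwartzMap.derivCLM ℝ ℂ (SchwartzMap.derivCLM ℝ ℂ ψ))) (⇑φ) x p with hJ20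
  set J11 := CWAux.wJ ε (⇑(SchwartzMap.derivCLM ℝ ℂ ψ)) (⇑(SchwartzMap.derivCLM ℝ ℂ φ)) x p with hJ11
  set J02 := CWAux.wJ ε (⇑ψ) (⇑(SchwartzMap.derivCLM ℝ ℂ (SchwartzMap.derivCLM ℝ ℂ φ))) x p with hJ02
  set K1 := ∫ y : ℝ, (y : ℂ) ^ 1 * CWAux.wit ε (⇑ψ) (⇑φ) x p y with hK1
  set K2 := ∫ y : ℝ, (y : ℂ) ^ 2 * CWAux.wit ε (⇑ψ) (⇑φ) x p y with hK2
  linear_combination c * e_eig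
    + (-(c * (ε : ℂ) ^ 2 / 2) * Complex.I * (p : ℂ) * ((ε : ℂ))⁻¹) * e_a
    + (-(3 * c * (ε : ℂ) ^ 2 / 4)) * e_b
    + (-(c * (ε : ℂ) ^ 2 / 4)) * e_c
    + (-(c * (ε : ℂ) ^ 2 * ((ε : ℂ))⁻¹ ^ 2 / 8) * K2
        - (c * (ε : ℂ) * ((ε : ℂ))⁻¹ * (x : ℂ) / 2) * K1
        + (c * (ε : ℂ) ^ 2 * ((ε : ℂ))⁻¹ ^ 2 * (p : ℂ) ^ 2 / 2) * J00) * Complex.I_sq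
    + ((c / 8) * ((ε : ℂ) * ((ε : ℂ))⁻¹ + 1) * K2 + (c * (x : ℂ) / 2) * K1
        + (c * (ε : ℂ) * (p : ℂ) * Complex.I / 2) * (J10 + J01)
        - (c * (p : ℂ) ^ 2 / 2) * ((ε : ℂ) * ((ε : ℂ))⁻¹ + 1) * J00) * hew
end

section
/- Let ε > 0, let φ be a Schwartz function on ℝ satisfying −(ε²/2)φ''(x) + (x²/2)φ(x) = μ·φ(x) for all x and some μ ∈ ℝ, and let ψ be any Schwartz function on ℝ. Then Ψ = W^ε_φ[ψ] satisfies the phase-space eigenvalue equation Ψ ⋆ H = μΨ for the harmonic oscillator Hamiltonian H(x,p) = (x² + p²)/2, namely: for all (x,p) ∈ ℝ², ((x² + p²)/2)·Ψ(x,p) − (ε²/8)·(∂²Ψ/∂x² + ∂²Ψ/∂p²)(x,p) − (iε/2)·(x·∂Ψ/∂p − p·∂Ψ/∂x)(x,p) = μ·Ψ(x,p). -/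
open MeasureTheory

namespace CrossWignerAux
open Complex SchwartzMap

noncomputable def ker (ε p : ℝ) (y : ℝ) : ℂ := Complex.exp (-Complex.I * (p:ℂ) * (y:ℂ) / (ε:ℂ))

lemma norm_ker (ε p y : ℝ) : ‖ker ε p y‖ = 1 := by
  have : -Complex.I * (p:ℂ) * (y:ℂ) / (ε:ℂ) = ((-(p*y)/ε : ℝ) : ℂ) * Complex.I := by
    push_cast; ring
  rw [ker, this, Complex.norm_exp]
  simp

noncomputable def itg (ε : ℝ) (u v : SchwartzMap ℝ ℂ) (n : ℕ) (x p : ℝ) (y : ℝ) : ℂ :=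
  (y:ℂ)^n * ker ε p y * u (x + y/2) * (starRingEnd ℂ) (v (x - y/2))

noncomputable def Ig (ε : ℝ) (u v : SchwartzMap ℝ ℂ) (n : ℕ) (x p : ℝ) : ℂ :=
  ∫ y : ℝ, itg ε u v n x p y

lemma norm_itg (ε : ℝ) (u v : SchwartzMap ℝ ℂ) (n : ℕ) (x p y : ℝ) :
    ‖itg ε u v n x p y‖ = |y|^n * ‖u (x + y/2)‖ * ‖v (x - y/2)‖ := by
  rw [itg, norm_mul, norm_mul, norm_mul, norm_ker, norm_pow]
  simp [Complex.norm_real, Real.norm_eq_abs, RCLike.norm_conj]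

lemma continuous_itg (ε : ℝ) (u v : SchwartzMap ℝ ℂ) (n : ℕ) (x p : ℝ) :
    Continuous (itg ε u v n x p) := by
  unfold itg ker
  exact (((continuous_ofReal.pow n).mul (Complex.continuous_exp.comp (by fun_prop))).mul
      (u.continuous.comp (by fun_prop))).mul
    (Complex.continuous_conj.comp (v.continuous.comp (by fun_prop)))

lemma schwartz_bound (u : SchwartzMap ℝ ℂ) (k : ℕ) :
    ∃ C, 0 ≤ C ∧ ∀ z : ℝ, (1+|z|)^k * ‖u z‖ ≤ C := by
  refine ⟨2^k * (Finset.Iic (k,0)).sup (fun m => SchwartzMap.seminorm ℝ m.1 m.2) u,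
    by positivity, fun z => ?_⟩
  simpa [Real.norm_eq_abs] using
    SchwartzMap.one_add_le_sup_seminorm_apply (𝕜 := ℝ) (m := (k,0)) le_rfl le_rfl u z

lemma translate_bound (u : SchwartzMap ℝ ℂ) (k : ℕ) (R : ℝ) (hR : 0 ≤ R) :
    ∃ C, 0 ≤ C ∧ ∀ x y : ℝ, |x| ≤ R → (1+|y|)^k * ‖u (x + y/2)‖ ≤ C := by
  obtain ⟨C, hC0, hC⟩ := schwartz_bound u k
  refine ⟨(3+2*R)^k * C, by positivity, fun x y hx => ?_⟩
  set z := x + y/2 with hz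
  have hy : |y| ≤ 2*|z| + 2*|x| := by
    have h1 : y = 2*z - 2*x := by rw [hz]; ring
    calc |y| = |2*z - 2*x| := by rw [h1]
    _ ≤ |2*z| + |2*x| := abs_sub _ _
    _ = 2*|z| + 2*|x| := by rw [abs_mul, abs_mul]; simp [abs_of_nonneg]
  have h1 : (1+|y|) ≤ (3+2*R) * (1+|z|) := by nlinarith [abs_nonneg z, abs_nonneg y]
  calc (1+|y|)^k * ‖u z‖ ≤ ((3+2*R)*(1+|z|))^k * ‖u z‖ := by
        gcongr
  _ = (3+2*R)^k * ((1+|z|)^k * ‖u z‖) := by rw [mul_pow]; ring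
  _ ≤ (3+2*R)^k * C := by gcongr; exact hC z

lemma prod_bound (u v : SchwartzMap ℝ ℂ) (n : ℕ) (R : ℝ) (hR : 0 ≤ R) :
    ∃ C, 0 ≤ C ∧ ∀ x y : ℝ, |x| ≤ R →
      |y|^n * ‖u (x + y/2)‖ * ‖v (x - y/2)‖ ≤ C / (1+|y|)^2 := by
  obtain ⟨C1, hC10, hC1⟩ := translate_bound u (n+2) R hR
  obtain ⟨C2, hC20, hC2⟩ := translate_bound v 0 R hR
  refine ⟨C1 * C2, by positivity, fun x y hx => ?_⟩
  have h2 : ‖v (x - y/2)‖ ≤ C2 := by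
    have h := hC2 x (-y) hx
    rw [pow_zero, one_mul, show x + -y/2 = x - y/2 by ring] at h
    exact h
  have hy1 : (0:ℝ) < 1 + |y| := by positivity
  have h1 : |y|^n * ‖u (x + y/2)‖ ≤ C1 / (1+|y|)^2 := by
    rw [le_div_iff₀ (by positivity)]
    calc |y|^n * ‖u (x + y/2)‖ * (1+|y|)^2
        ≤ (1+|y|)^n * ‖u (x + y/2)‖ * (1+|y|)^2 := by
          gcongr
          linarith [abs_nonneg y]
      _ = (1+|y|)^(n+2) * ‖u (x + y/2)‖ := by rw [pow_add]; ring
      _ ≤ C1 := hC1 x y hx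
  calc |y|^n * ‖u (x + y/2)‖ * ‖v (x - y/2)‖ ≤ (C1 / (1+|y|)^2) * C2 := by
        apply mul_le_mul h1 h2 (norm_nonneg _) (by positivity)
    _ = C1 * C2 / (1+|y|)^2 := by ring

lemma integrable_decay (C : ℝ) : Integrable (fun y : ℝ => C / (1+|y|)^2) := by
  have h := (integrable_one_add_norm (E := ℝ) (μ := volume) (r := 2) (by norm_num)).const_mul C
  refine h.congr (Filter.Eventually.of_forall fun y => ?_)
  show C * (1 + ‖y‖) ^ (-2:ℝ) = C / (1+|y|)^2
  rw [Real.rpow_neg (by positivity), Real.norm_eq_abs,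
    show ((2:ℝ)) = ((2:ℕ):ℝ) by norm_num, Real.rpow_natCast]
  ring

lemma integrable_itg (ε : ℝ) (u v : SchwartzMap ℝ ℂ) (n : ℕ) (x p : ℝ) :
    Integrable (itg ε u v n x p) := by
  obtain ⟨C, hC0, hC⟩ := prod_bound u v n |x| (abs_nonneg x)
  refine (integrable_decay C).mono' ((continuous_itg ε u v n x p).aestronglyMeasurable)
    (Filter.Eventually.of_forall fun y => ?_)
  rw [norm_itg]
  exact hC x y le_rfl

lemma _root_.HasDerivAt.conjC {g : ℝ → ℂ} {g' : ℂ} {t : ℝ} (h : HasDerivAt g g' t) :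
    HasDerivAt (fun s => (starRingEnd ℂ) (g s)) ((starRingEnd ℂ) g') t := by
  have h2 := (Complex.conjCLE.toContinuousLinearMap.hasFDerivAt (x := g t)).comp t h.hasFDerivAt
  have h3 := h2.hasDerivAt
  simpa [Function.comp_def] using h3

lemma hasDerivAt_itg_x (ε : ℝ) (u v : SchwartzMap ℝ ℂ) (n : ℕ) (p y : ℝ) (x : ℝ) :
    HasDerivAt (fun x' => itg ε u v n x' p y)
      (itg ε (derivCLM ℝ ℂ u) v n x p y + itg ε u (derivCLM ℝ ℂ v) n x p y) x := by
  have hu : HasDerivAt (fun x' : ℝ => u (x' + y/2)) (deriv u (x + y/2)) x :=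
    HasDerivAt.comp_add_const x (y/2) (u.differentiable.differentiableAt).hasDerivAt
  have hv : HasDerivAt (fun x' : ℝ => (starRingEnd ℂ) (v (x' - y/2)))
      ((starRingEnd ℂ) (deriv v (x - y/2))) x :=
    (HasDerivAt.comp_sub_const x (y/2) (v.differentiable.differentiableAt).hasDerivAt).conjC
  have h3 := (hu.const_mul ((y:ℂ)^n * ker ε p y)).mul hv
  refine h3.congr_deriv ?_
  rfl

lemma hasDerivAt_itg_p (ε : ℝ) (u v : SchwartzMap ℝ ℂ) (n : ℕ) (x y : ℝ) (p : ℝ) :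
    HasDerivAt (fun p' => itg ε u v n x p' y)
      ((-Complex.I/(ε:ℂ)) * itg ε u v (n+1) x p y) p := by
  have hre : HasDerivAt (fun p' : ℝ => (p' : ℂ)) 1 p := by
    exact Complex.ofRealCLM.hasDerivAt
  have hlin : HasDerivAt (fun p' : ℝ => -Complex.I * (p':ℂ) * (y:ℂ) / (ε:ℂ))
      (-Complex.I * (y:ℂ) / (ε:ℂ)) p := by
    have := ((hre.const_mul (-Complex.I)).mul_const ((y:ℂ))).div_const ((ε:ℂ))
    simpa using this
  have hker : HasDerivAt (fun p' : ℝ => ker ε p' y)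
      (Complex.exp (-Complex.I * (p:ℂ) * (y:ℂ) / (ε:ℂ)) * (-Complex.I * (y:ℂ) / (ε:ℂ))) p :=
    hlin.cexp
  have h3 := ((hker.const_mul ((y:ℂ)^n)).mul_const (u (x + y/2))).mul_const
    ((starRingEnd ℂ) (v (x - y/2)))
  refine h3.congr_deriv ?_
  simp only [itg, ker, pow_succ]
  ring

lemma abs_le_of_ball {x x' : ℝ} (h : x' ∈ Metric.ball x 1) : |x'| ≤ |x| + 1 := by
  rw [Metric.mem_ball, Real.dist_eq] at h
  have := abs_add_le (x' - x) x
  have h2 : |x' - x + x| = |x'| := by norm_num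
  linarith [_root_.abs_abs x]

lemma hasDerivAt_Ig_x (ε : ℝ) (u v : SchwartzMap ℝ ℂ) (n : ℕ) (p : ℝ) (x : ℝ) :
    HasDerivAt (fun x' => Ig ε u v n x' p)
      (Ig ε (derivCLM ℝ ℂ u) v n x p + Ig ε u (derivCLM ℝ ℂ v) n x p) x := by
  obtain ⟨C1, hC10, hC1⟩ := prod_bound (derivCLM ℝ ℂ u) v n (|x|+1) (by positivity)
  obtain ⟨C2, hC20, hC2⟩ := prod_bound u (derivCLM ℝ ℂ v) n (|x|+1) (by positivity)
  have key := hasDerivAt_integral_of_dominated_loc_of_deriv_le (μ := volume)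
    (F := fun x' y => itg ε u v n x' p y)
    (F' := fun x' y => itg ε (derivCLM ℝ ℂ u) v n x' p y + itg ε u (derivCLM ℝ ℂ v) n x' p y)
    (x₀ := x) (bound := fun y => (C1 + C2) / (1+|y|)^2) (Metric.ball_mem_nhds x one_pos)
    (Filter.Eventually.of_forall fun x' => (continuous_itg ε u v n x' p).aestronglyMeasurable)
    (integrable_itg ε u v n x p)
    (((continuous_itg ε (derivCLM ℝ ℂ u) v n x p).add
      (continuous_itg ε u (derivCLM ℝ ℂ v) n x p)).aestronglyMeasurable)
    (Filter.Eventually.of_forall fun y => fun x' hx' => ?_)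
    (integrable_decay (C1 + C2))
    (Filter.Eventually.of_forall fun y => fun x' hx' => hasDerivAt_itg_x ε u v n p y x')
  case refine_1 =>
    calc ‖itg ε (derivCLM ℝ ℂ u) v n x' p y + itg ε u (derivCLM ℝ ℂ v) n x' p y‖
        ≤ ‖itg ε (derivCLM ℝ ℂ u) v n x' p y‖ + ‖itg ε u (derivCLM ℝ ℂ v) n x' p y‖ :=
          norm_add_le _ _
      _ ≤ C1 / (1+|y|)^2 + C2 / (1+|y|)^2 := by
          rw [norm_itg, norm_itg]
          exact add_le_add (hC1 x' y (abs_le_of_ball hx')) (hC2 x' y (abs_le_of_ball hx'))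
      _ = (C1 + C2) / (1+|y|)^2 := by ring
  have h2 := key.2
  rw [integral_add (integrable_itg ε (derivCLM ℝ ℂ u) v n x p)
    (integrable_itg ε u (derivCLM ℝ ℂ v) n x p)] at h2
  exact h2

lemma hasDerivAt_Ig_p (ε : ℝ) (u v : SchwartzMap ℝ ℂ) (n : ℕ) (x : ℝ) (p : ℝ) :
    HasDerivAt (fun p' => Ig ε u v n x p')
      ((-Complex.I/(ε:ℂ)) * Ig ε u v (n+1) x p) p := by
  obtain ⟨C1, hC10, hC1⟩ := prod_bound u v (n+1) |x| (abs_nonneg x)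
  have key := hasDerivAt_integral_of_dominated_loc_of_deriv_le (μ := volume)
    (F := fun p' y => itg ε u v n x p' y)
    (F' := fun p' y => (-Complex.I/(ε:ℂ)) * itg ε u v (n+1) x p' y)
    (x₀ := p) (bound := fun y => (‖-Complex.I/(ε:ℂ)‖ * C1) / (1+|y|)^2) (Metric.ball_mem_nhds p one_pos)
    (Filter.Eventually.of_forall fun p' => (continuous_itg ε u v n x p').aestronglyMeasurable)
    (integrable_itg ε u v n x p)
    ((continuous_const.mul (continuous_itg ε u v (n+1) x p)).aestronglyMeasurable)
    (Filter.Eventually.of_forall fun y => fun p' hp' => ?_)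
    (integrable_decay (‖-Complex.I/(ε:ℂ)‖ * C1))
    (Filter.Eventually.of_forall fun y => fun p' hp' => hasDerivAt_itg_p ε u v n x y p')
  case refine_1 =>
    show ‖(-Complex.I/(ε:ℂ)) * itg ε u v (n+1) x p' y‖ ≤ ‖-Complex.I/(ε:ℂ)‖ * C1 / (1+|y|)^2
    rw [norm_mul, norm_itg, mul_div_assoc]
    exact mul_le_mul_of_nonneg_left (hC1 x y le_rfl) (norm_nonneg _)
  have h2 := key.2
  rw [integral_const_mul] at h2
  exact h2

lemma hasDerivAt_h (ε : ℝ) (u v : SchwartzMap ℝ ℂ) (x p : ℝ) (y : ℝ) :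
    HasDerivAt (fun y' => ker ε p y' * u (x + y'/2) * (starRingEnd ℂ) (v (x - y'/2)))
      ((-Complex.I*(p:ℂ)/(ε:ℂ)) * itg ε u v 0 x p y
        + (1/2:ℂ) * itg ε (derivCLM ℝ ℂ u) v 0 x p y
        - (1/2:ℂ) * itg ε u (derivCLM ℝ ℂ v) 0 x p y) y := by
  have hre : HasDerivAt (fun y' : ℝ => (y' : ℂ)) 1 y := by
    exact Complex.ofRealCLM.hasDerivAt
  have hlin : HasDerivAt (fun y' : ℝ => -Complex.I * (p:ℂ) * (y':ℂ) / (ε:ℂ))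
      (-Complex.I * (p:ℂ) / (ε:ℂ)) y := by
    have := (hre.const_mul (-Complex.I * (p:ℂ))).div_const ((ε:ℂ))
    simpa using this
  have hker : HasDerivAt (fun y' : ℝ => ker ε p y')
      (Complex.exp (-Complex.I * (p:ℂ) * (y:ℂ) / (ε:ℂ)) * (-Complex.I * (p:ℂ) / (ε:ℂ))) y :=
    hlin.cexp
  have hu : HasDerivAt (fun y' : ℝ => u (x + y'/2)) ((1/2:ℝ) • deriv u (x + y/2)) y := by
    have h1 : HasDerivAt (fun y' : ℝ => x + y'/2) (1/2) y := by
      simpa using ((hasDerivAt_id y).div_const 2).const_add x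
    exact HasDerivAt.scomp y (u.differentiable.differentiableAt).hasDerivAt h1
  have hv : HasDerivAt (fun y' : ℝ => (starRingEnd ℂ) (v (x - y'/2)))
      ((starRingEnd ℂ) ((-(1/2):ℝ) • deriv v (x - y/2))) y := by
    have h1 : HasDerivAt (fun y' : ℝ => x - y'/2) (-(1/2)) y := by
      simpa using ((hasDerivAt_id y).div_const 2).const_sub x
    exact (HasDerivAt.scomp y (v.differentiable.differentiableAt).hasDerivAt h1).conjC
  have h3 := (hker.mul hu).mul hv
  refine h3.congr_deriv ?_
  simp only [itg, ker, derivCLM_apply, pow_zero, one_mul, Complex.real_smul, map_mul,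
    Complex.conj_ofReal, Pi.mul_apply]
  push_cast
  ring

lemma ibp (ε : ℝ) (u v : SchwartzMap ℝ ℂ) (x p : ℝ) :
    (-Complex.I*(p:ℂ)/(ε:ℂ)) * Ig ε u v 0 x p
      + (1/2:ℂ) * Ig ε (derivCLM ℝ ℂ u) v 0 x p
      - (1/2:ℂ) * Ig ε u (derivCLM ℝ ℂ v) 0 x p = 0 := by
  obtain ⟨C, hC0, hC⟩ := prod_bound u v 0 |x| (abs_nonneg x)
  set h : ℝ → ℂ := fun y => ker ε p y * u (x + y/2) * (starRingEnd ℂ) (v (x - y/2)) with hh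
  set h' : ℝ → ℂ := fun y => (-Complex.I*(p:ℂ)/(ε:ℂ)) * itg ε u v 0 x p y
      + (1/2:ℂ) * itg ε (derivCLM ℝ ℂ u) v 0 x p y
      - (1/2:ℂ) * itg ε u (derivCLM ℝ ℂ v) 0 x p y with hh'
  have hInt : Integrable h' := by
    apply Integrable.sub
    · exact (((integrable_itg ε u v 0 x p).const_mul _).add
        ((integrable_itg ε (derivCLM ℝ ℂ u) v 0 x p).const_mul _))
    · exact (integrable_itg ε u (derivCLM ℝ ℂ v) 0 x p).const_mul _
  have hEq : ∀ T : ℝ, (∫ y in (-T)..T, h' y) = h T - h (-T) := fun T =>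
    intervalIntegral.integral_eq_sub_of_hasDerivAt
      (fun t _ => hasDerivAt_h ε u v x p t) (hInt.intervalIntegrable)
  have ht1 : Filter.Tendsto (fun T : ℝ => ∫ y in (-T)..T, h' y)
      Filter.atTop (nhds (∫ y, h' y)) :=
    intervalIntegral_tendsto_integral hInt Filter.tendsto_neg_atTop_atBot Filter.tendsto_id
  have hbound : ∀ t : ℝ, ‖h t‖ ≤ C / (1+|t|)^2 := by
    intro t
    have h1 : ‖h t‖ = ‖u (x + t/2)‖ * ‖v (x - t/2)‖ := by
      rw [hh]; simp only [norm_mul, norm_ker, one_mul, RCLike.norm_conj]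
    have h2 := hC x t le_rfl
    rw [pow_zero, one_mul] at h2
    rw [h1]; exact h2
  have tendsto_g : Filter.Tendsto (fun s : ℝ => C/(1+s)^2) Filter.atTop (nhds 0) :=
    Filter.Tendsto.div_atTop tendsto_const_nhds
      ((Filter.tendsto_pow_atTop two_ne_zero).comp
        (Filter.tendsto_atTop_add_const_left _ 1 Filter.tendsto_id))
  have habs_top : Filter.Tendsto h Filter.atTop (nhds 0) :=
    squeeze_zero_norm hbound (tendsto_g.comp Filter.tendsto_abs_atTop_atTop)
  have habs_bot : Filter.Tendsto h Filter.atBot (nhds 0) :=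
    squeeze_zero_norm hbound (tendsto_g.comp Filter.tendsto_abs_atBot_atTop)
  have ht2 : Filter.Tendsto (fun T : ℝ => h T - h (-T)) Filter.atTop (nhds 0) := by
    have := habs_top.sub (habs_bot.comp Filter.tendsto_neg_atTop_atBot)
    simpa using this
  have hzero : (∫ y, h' y) = 0 := by
    refine tendsto_nhds_unique ?_ ht2
    have : (fun T : ℝ => ∫ y in (-T)..T, h' y) = fun T : ℝ => h T - h (-T) := funext hEq
    rw [← this]
    exact ht1
  rw [hh', integral_sub, integral_add, integral_const_mul, integral_const_mul,
    integral_const_mul] at hzero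
  · exact hzero
  · exact (integrable_itg ε u v 0 x p).const_mul _
  · exact (integrable_itg ε (derivCLM ℝ ℂ u) v 0 x p).const_mul _
  · exact ((integrable_itg ε u v 0 x p).const_mul _).add
      ((integrable_itg ε (derivCLM ℝ ℂ u) v 0 x p).const_mul _)
  · exact (integrable_itg ε u (derivCLM ℝ ℂ v) 0 x p).const_mul _

lemma ibp' (ε : ℝ) (hε : ε ≠ 0) (u v : SchwartzMap ℝ ℂ) (x p : ℝ) :
    (-Complex.I*(p:ℂ)) * Ig ε u v 0 x p
      + ((ε:ℂ)/2) * Ig ε (derivCLM ℝ ℂ u) v 0 x p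
      - ((ε:ℂ)/2) * Ig ε u (derivCLM ℝ ℂ v) 0 x p = 0 := by
  have h0 := ibp ε u v x p
  have hinv : (ε:ℂ) * (ε:ℂ)⁻¹ = 1 := mul_inv_cancel₀ (Complex.ofReal_ne_zero.mpr hε)
  linear_combination (ε:ℂ) * h0 + (Complex.I * (p:ℂ) * Ig ε u v 0 x p) * hinv

lemma dd_eq (φ : SchwartzMap ℝ ℂ) (z : ℝ) :
    (derivCLM ℝ ℂ (derivCLM ℝ ℂ φ)) z = iteratedDeriv 2 (⇑φ) z := by
  rw [iteratedDeriv_succ, iteratedDeriv_one, derivCLM_apply]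
  congr 1

lemma heigen (ε : ℝ) (ψ φ : SchwartzMap ℝ ℂ) (mu : ℝ)
    (hφ : ∀ t : ℝ, -((ε : ℂ) ^ 2 / 2) * iteratedDeriv 2 (⇑φ) t
        + ((t : ℂ) ^ 2 / 2) * φ t = (mu : ℂ) * φ t)
    (x p : ℝ) :
    -((ε:ℂ)^2/2) * Ig ε ψ (derivCLM ℝ ℂ (derivCLM ℝ ℂ φ)) 0 x p
      + ((x:ℂ)^2/2) * Ig ε ψ φ 0 x p
      - ((x:ℂ)/2) * Ig ε ψ φ 1 x p
      + (1/8:ℂ) * Ig ε ψ φ 2 x p = (mu:ℂ) * Ig ε ψ φ 0 x p := by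
  have key : ∀ y : ℝ,
      -((ε:ℂ)^2/2) * itg ε ψ (derivCLM ℝ ℂ (derivCLM ℝ ℂ φ)) 0 x p y
        + ((x:ℂ)^2/2) * itg ε ψ φ 0 x p y
        - ((x:ℂ)/2) * itg ε ψ φ 1 x p y
        + (1/8:ℂ) * itg ε ψ φ 2 x p y = (mu:ℂ) * itg ε ψ φ 0 x p y := by
    intro y
    have hc := congrArg (starRingEnd ℂ) (hφ (x - y/2))
    simp only [map_add, map_mul, map_neg, map_div₀, map_pow, map_ofNat,
      Complex.conj_ofReal] at hc
    simp only [itg, dd_eq]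
    push_cast at hc ⊢
    linear_combination (ker ε p y * (ψ (x + y/2))) * hc
  have hIa : Integrable (fun y => -((ε:ℂ)^2/2) * itg ε ψ (derivCLM ℝ ℂ (derivCLM ℝ ℂ φ)) 0 x p y) :=
    (integrable_itg ε ψ _ 0 x p).const_mul _
  have hIb : Integrable (fun y => ((x:ℂ)^2/2) * itg ε ψ φ 0 x p y) :=
    (integrable_itg ε ψ φ 0 x p).const_mul _
  have hIc : Integrable (fun y => ((x:ℂ)/2) * itg ε ψ φ 1 x p y) :=
    (integrable_itg ε ψ φ 1 x p).const_mul _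
  have hId : Integrable (fun y => (1/8:ℂ) * itg ε ψ φ 2 x p y) :=
    (integrable_itg ε ψ φ 2 x p).const_mul _
  have hIab : Integrable (fun y => -((ε:ℂ)^2/2) * itg ε ψ (derivCLM ℝ ℂ (derivCLM ℝ ℂ φ)) 0 x p y
      + ((x:ℂ)^2/2) * itg ε ψ φ 0 x p y) := hIa.add hIb
  have hIabc : Integrable (fun y => -((ε:ℂ)^2/2) * itg ε ψ (derivCLM ℝ ℂ (derivCLM ℝ ℂ φ)) 0 x p y
      + ((x:ℂ)^2/2) * itg ε ψ φ 0 x p y - ((x:ℂ)/2) * itg ε ψ φ 1 x p y) := hIab.sub hIc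
  calc -((ε:ℂ)^2/2) * Ig ε ψ (derivCLM ℝ ℂ (derivCLM ℝ ℂ φ)) 0 x p
      + ((x:ℂ)^2/2) * Ig ε ψ φ 0 x p
      - ((x:ℂ)/2) * Ig ε ψ φ 1 x p
      + (1/8:ℂ) * Ig ε ψ φ 2 x p
      = ∫ y, (-((ε:ℂ)^2/2) * itg ε ψ (derivCLM ℝ ℂ (derivCLM ℝ ℂ φ)) 0 x p y
        + ((x:ℂ)^2/2) * itg ε ψ φ 0 x p y
        - ((x:ℂ)/2) * itg ε ψ φ 1 x p y
        + (1/8:ℂ) * itg ε ψ φ 2 x p y) := by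
        rw [integral_add hIabc hId, integral_sub hIab hIc,
          integral_add hIa hIb, integral_const_mul, integral_const_mul, integral_const_mul,
          integral_const_mul]
        rfl
    _ = ∫ y, (mu:ℂ) * itg ε ψ φ 0 x p y := by rw [funext key]
    _ = (mu:ℂ) * Ig ε ψ φ 0 x p := by rw [integral_const_mul]; rfl

end CrossWignerAux

open CrossWignerAux Complex SchwartzMap

/-- If `φ` is a Schwartz eigenfunction of the harmonic oscillator
`−(ε²/2)φ'' + (x²/2)φ = μφ` and `ψ` is any Schwartz function, then `Ψ = W^ε_φ[ψ]`
satisfies the right Moyal star eigenvalue equation `Ψ ⋆ H = μΨ` for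
`H(x,p) = (x²+p²)/2`, written out as an explicit second-order PDE. -/
theorem crossWigner_star_genvalue_right (ε : ℝ) (hε : 0 < ε)
    (ψ φ : SchwartzMap ℝ ℂ) (mu : ℝ)
    (hφ : ∀ x : ℝ, -((ε : ℂ) ^ 2 / 2) * iteratedDeriv 2 (⇑φ) x
        + ((x : ℂ) ^ 2 / 2) * φ x = (mu : ℂ) * φ x) :
    ∀ x p : ℝ,
      (((x ^ 2 + p ^ 2) / 2 : ℝ) : ℂ) * crossWigner ε (⇑ψ) (⇑φ) x p
        - ((ε : ℂ) ^ 2 / 8) *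
            (iteratedDeriv 2 (fun x' : ℝ => crossWigner ε (⇑ψ) (⇑φ) x' p) x
              + iteratedDeriv 2 (fun p' : ℝ => crossWigner ε (⇑ψ) (⇑φ) x p') p)
        - (Complex.I * (ε : ℂ) / 2) *
            ((x : ℂ) * deriv (fun p' : ℝ => crossWigner ε (⇑ψ) (⇑φ) x p') p
              - (p : ℂ) * deriv (fun x' : ℝ => crossWigner ε (⇑ψ) (⇑φ) x' p) x)
      = (mu : ℂ) * crossWigner ε (⇑ψ) (⇑φ) x p := by
  intro x p
  have hcw : ∀ x' p' : ℝ, crossWigner ε (⇑ψ) (⇑φ) x' p'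
      = ((2 * Real.pi * ε : ℝ) : ℂ)⁻¹ * Ig ε ψ φ 0 x' p' := by
    intro x' p'
    rw [crossWigner, Ig]
    congr 1
    simp [itg, ker]
  set c : ℂ := ((2 * Real.pi * ε : ℝ) : ℂ)⁻¹ with hc
  have hfex : (fun t : ℝ => crossWigner ε (⇑ψ) (⇑φ) t p) = fun t => c * Ig ε ψ φ 0 t p :=
    funext fun t => hcw t p
  have hfep : (fun t : ℝ => crossWigner ε (⇑ψ) (⇑φ) x t) = fun t => c * Ig ε ψ φ 0 x t :=
    funext fun t => hcw x t
  have hdx : deriv (fun x' : ℝ => crossWigner ε (⇑ψ) (⇑φ) x' p) x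
      = c * (Ig ε (derivCLM ℝ ℂ ψ) φ 0 x p + Ig ε ψ (derivCLM ℝ ℂ φ) 0 x p) := by
    rw [hfex]
    exact ((hasDerivAt_Ig_x ε ψ φ 0 p x).const_mul c).deriv
  have hdp : deriv (fun p' : ℝ => crossWigner ε (⇑ψ) (⇑φ) x p') p
      = c * ((-Complex.I/(ε:ℂ)) * Ig ε ψ φ 1 x p) := by
    rw [hfep]
    exact ((hasDerivAt_Ig_p ε ψ φ 0 x p).const_mul c).deriv
  have hdxx : iteratedDeriv 2 (fun x' : ℝ => crossWigner ε (⇑ψ) (⇑φ) x' p) x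
      = c * ((Ig ε (derivCLM ℝ ℂ (derivCLM ℝ ℂ ψ)) φ 0 x p + Ig ε (derivCLM ℝ ℂ ψ) (derivCLM ℝ ℂ φ) 0 x p)
          + (Ig ε (derivCLM ℝ ℂ ψ) (derivCLM ℝ ℂ φ) 0 x p + Ig ε ψ (derivCLM ℝ ℂ (derivCLM ℝ ℂ φ)) 0 x p)) := by
    rw [iteratedDeriv_succ, iteratedDeriv_one, hfex]
    have h1 : deriv (fun t : ℝ => c * Ig ε ψ φ 0 t p)
        = fun t => c * (Ig ε (derivCLM ℝ ℂ ψ) φ 0 t p + Ig ε ψ (derivCLM ℝ ℂ φ) 0 t p) :=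
      funext fun t => ((hasDerivAt_Ig_x ε ψ φ 0 p t).const_mul c).deriv
    rw [h1]
    exact (((hasDerivAt_Ig_x ε (derivCLM ℝ ℂ ψ) φ 0 p x).add
      (hasDerivAt_Ig_x ε ψ (derivCLM ℝ ℂ φ) 0 p x)).const_mul c).deriv
  have hdpp : iteratedDeriv 2 (fun p' : ℝ => crossWigner ε (⇑ψ) (⇑φ) x p') p
      = c * ((-Complex.I/(ε:ℂ)) * ((-Complex.I/(ε:ℂ)) * Ig ε ψ φ 2 x p)) := by
    rw [iteratedDeriv_succ, iteratedDeriv_one, hfep]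
    have h1 : deriv (fun t : ℝ => c * Ig ε ψ φ 0 x t)
        = fun t => c * ((-Complex.I/(ε:ℂ)) * Ig ε ψ φ 1 x t) :=
      funext fun t => ((hasDerivAt_Ig_p ε ψ φ 0 x t).const_mul c).deriv
    rw [h1]
    exact (((hasDerivAt_Ig_p ε ψ φ 1 x p).const_mul _).const_mul c).deriv
  have hS : (((x ^ 2 + p ^ 2) / 2 : ℝ) : ℂ) = ((x:ℂ)^2 + (p:ℂ)^2)/2 := by push_cast; ring
  have hεne : (ε:ℝ) ≠ 0 := ne_of_gt hε
  have hinv : (ε:ℂ) * (ε:ℂ)⁻¹ = 1 := mul_inv_cancel₀ (Complex.ofReal_ne_zero.mpr hεne)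
  have hI : Complex.I * Complex.I = -1 := Complex.I_mul_I
  have rel1 := ibp' ε hεne ψ φ x p
  have rel2 := ibp' ε hεne (derivCLM ℝ ℂ ψ) φ x p
  have rel3 := ibp' ε hεne ψ (derivCLM ℝ ℂ φ) x p
  have heig := heigen ε ψ φ mu hφ x p
  rw [hcw x p, hS, hdx, hdp, hdxx, hdpp]
  linear_combination (c * (Complex.I*(p:ℂ)/2)) * rel1 + (c * (-(ε:ℂ)/4)) * rel2
    + (c * (-(3:ℂ)*(ε:ℂ)/4)) * rel3 + c * heig
    + (c*(p:ℂ)^2*(Ig ε ψ φ 0 x p)/2 - c*(ε:ℂ)^2*((ε:ℂ)⁻¹)^2*(Ig ε ψ φ 2 x p)/8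
        + c*(ε:ℂ)*((ε:ℂ)⁻¹)*(x:ℂ)*(Ig ε ψ φ 1 x p)/2) * hI
    + (c*(Ig ε ψ φ 2 x p)*((ε:ℂ)*(ε:ℂ)⁻¹+1)/8 - c*(x:ℂ)*(Ig ε ψ φ 1 x p)/2) * hinv
end

section
/- Let ε > 0 and n, m ∈ ℕ, and let W_{nm} = W^ε_{v_mᵋ}[v_nᵋ] be the cross-Wigner transform of the Hermite functions v_nᵋ and v_mᵋ. Then W_{nm} satisfies the Moyal (sine) bracket eigenvalue equation of the quantum Liouville operator of the harmonic oscillator: for all (x,p) ∈ ℝ², p·(∂W_{nm}/∂x)(x,p) − x·(∂W_{nm}/∂p)(x,p) = (i/ε)·(E_nᵋ − E_mᵋ)·W_{nm}(x,p), where E_kᵋ = (k + 1/2)ε; equivalently, the eigenvalue is i(n − m). -/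
open MeasureTheory

/-- The nth physicists' Hermite polynomial (as a function). -/
noncomputable def hermitePoly (n : ℕ) (x : ℝ) : ℝ :=
  (-1 : ℝ) ^ n * Real.exp (x ^ 2) * iteratedDeriv n (fun t : ℝ => Real.exp (-t ^ 2)) x

/-- The semiclassical Hermite function `v_nᵋ`. -/
noncomputable def hermiteFun (ε : ℝ) (n : ℕ) (x : ℝ) : ℝ :=
  (Real.pi * ε) ^ (-(1 / 4 : ℝ)) * ((2 : ℝ) ^ n * (n.factorial : ℝ)) ^ (-(1 / 2 : ℝ)) *
    Real.exp (-x ^ 2 / (2 * ε)) * hermitePoly n (x / Real.sqrt ε)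

open Polynomial Filter Topology Set


noncomputable def herm : ℕ → Polynomial ℝ
  | 0 => 1
  | n + 1 => C 2 * X * herm n - derivative (herm n)

theorem herm_zero : herm 0 = 1 := rfl
theorem herm_succ (n : ℕ) : herm (n+1) = C 2 * X * herm n - derivative (herm n) := rfl

theorem deriv_herm (n : ℕ) : derivative (herm (n+1)) = C (2*(n+1) : ℝ) * herm n := by
  induction n with
  | zero => simp [herm_succ, herm_zero]
  | succ n ih =>
      rw [herm_succ (n+1), derivative_sub, derivative_mul, derivative_mul, ih]
      rw [show derivative (C (2*(n+1):ℝ) * herm n) = C (2*(n+1):ℝ) * derivative (herm n) by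
        rw [derivative_mul, derivative_C, zero_mul, zero_add]]
      simp only [derivative_C, derivative_X, zero_mul, zero_add, mul_one, Nat.cast_add,
        Nat.cast_one]
      rw [show (C (2*((n:ℝ)+1+1)) : ℝ[X]) = C (2*((n:ℝ)+1)) + C 2 by rw [← C_add]; ring_nf]
      rw [herm_succ n]
      ring

/-- Hermite ODE as a polynomial identity. -/
theorem herm_ode (n : ℕ) :
    derivative (derivative (herm n)) - C 2 * X * derivative (herm n) + C (2*n : ℝ) * herm n = 0 := by
  cases n with
  | zero => simp [herm_zero]
  | succ n =>
      rw [deriv_herm n, show derivative (C (2*(n+1):ℝ) * herm n) = C (2*(n+1):ℝ) * derivative (herm n) by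
        rw [derivative_mul, derivative_C, zero_mul, zero_add], herm_succ n]
      push_cast
      ring

theorem iteratedDeriv_gauss (n : ℕ) (x : ℝ) :
    iteratedDeriv n (fun t : ℝ => Real.exp (-t ^ 2)) x
      = (-1 : ℝ) ^ n * (herm n).eval x * Real.exp (-x ^ 2) := by
  induction n generalizing x with
  | zero => simp [herm_zero]
  | succ n ih =>
      have ih' : iteratedDeriv n (fun t : ℝ => Real.exp (-t ^ 2))
          = fun x => (-1 : ℝ) ^ n * (herm n).eval x * Real.exp (-x ^ 2) := funext ih
      rw [iteratedDeriv_succ, ih']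
      have hexp : HasDerivAt (fun x : ℝ => Real.exp (-x ^ 2))
          (-(2*x) * Real.exp (-x ^ 2)) x := by
        have h1 : HasDerivAt (fun x : ℝ => -x ^ 2) (-(2*x)) x := by
          simpa using ((hasDerivAt_pow 2 x).fun_neg)
        simpa [mul_comm] using h1.exp
      have h2 : HasDerivAt (fun x : ℝ => (-1 : ℝ) ^ n * (herm n).eval x * Real.exp (-x ^ 2))
          ((-1:ℝ)^(n+1) * (herm (n+1)).eval x * Real.exp (-x^2)) x := by
        have h3 : HasDerivAt (fun x : ℝ => (-1 : ℝ) ^ n * (herm n).eval x)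
            ((-1:ℝ)^n * (derivative (herm n)).eval x) x :=
          ((herm n).hasDerivAt x).const_mul _
        have := h3.fun_mul hexp
        refine this.congr_deriv ?_
        rw [herm_succ]
        simp [pow_succ]
        ring
      rw [h2.deriv]

theorem hermitePoly_eq (n : ℕ) (x : ℝ) : hermitePoly n x = (herm n).eval x := by
  rw [hermitePoly, iteratedDeriv_gauss]
  rw [show (-1:ℝ)^n * Real.exp (x^2) * ((-1:ℝ)^n * (herm n).eval x * Real.exp (-x^2))
    = ((-1:ℝ)^n)^2 * (herm n).eval x * (Real.exp (x^2) * Real.exp (-x^2)) by ring]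
  rw [← Real.exp_add, ← pow_mul, mul_comm n 2, pow_mul]
  simp

/-! ### Polynomial × Gaussian machinery -/

theorem tendsto_poly_gauss_atTop {c : ℝ} (hc : 0 < c) (Q : ℝ[X]) :
    Tendsto (fun t => Q.eval t * Real.exp (-(c * t ^ 2))) atTop (𝓝 0) := by
  apply squeeze_zero_norm' (a := fun t => |Q.eval t / Real.exp t|)
  · filter_upwards [eventually_ge_atTop (max c⁻¹ 1)] with t ht
    have ht1 : (1:ℝ) ≤ t := le_trans (le_max_right _ _) ht
    have htc : c⁻¹ ≤ t := le_trans (le_max_left _ _) ht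
    have h0 : (0:ℝ) < t := lt_of_lt_of_le one_pos ht1
    have hct : 1 ≤ c * t := by
      calc (1:ℝ) = c * c⁻¹ := by field_simp
        _ ≤ c * t := by nlinarith
    have hle : t ≤ c * t ^ 2 := by nlinarith
    have : Real.exp (-(c * t ^ 2)) ≤ Real.exp (-t) := by
      apply Real.exp_le_exp.2; linarith
    rw [norm_mul, Real.norm_eq_abs, Real.norm_eq_abs, abs_div, Real.abs_exp, Real.abs_exp]
    rw [div_eq_mul_inv, ← Real.exp_neg]
    exact mul_le_mul_of_nonneg_left this (abs_nonneg _)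
  · have := (Q.tendsto_div_exp_atTop).abs
    simpa using this

theorem tendsto_poly_gauss_atBot {c : ℝ} (hc : 0 < c) (Q : ℝ[X]) :
    Tendsto (fun t => Q.eval t * Real.exp (-(c * t ^ 2))) atBot (𝓝 0) := by
  have h := tendsto_poly_gauss_atTop hc (Q.comp (-X))
  have h2 := h.comp tendsto_neg_atBot_atTop
  convert h2 using 2 with t
  simp [Function.comp, eval_comp]

theorem poly_gauss_bdd {c : ℝ} (hc : 0 < c) (Q : ℝ[X]) :
    ∃ C : ℝ, 0 ≤ C ∧ ∀ t, |Q.eval t| * Real.exp (-(c * t ^ 2)) ≤ C := by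
  set g : ℝ → ℝ := fun t => Q.eval t * Real.exp (-(c * t ^ 2)) with hg
  have hgc : Continuous g := (Q.continuous).mul (Real.continuous_exp.comp (by continuity))
  have h1 : ∀ᶠ t in atTop, |g t| ≤ 1 := by
    have := Metric.tendsto_nhds.mp (tendsto_poly_gauss_atTop hc Q) 1 one_pos
    filter_upwards [this] with t ht
    rw [Real.dist_eq, sub_zero] at ht; exact ht.le
  have h2 : ∀ᶠ t in atBot, |g t| ≤ 1 := by
    have := Metric.tendsto_nhds.mp (tendsto_poly_gauss_atBot hc Q) 1 one_pos
    filter_upwards [this] with t ht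
    rw [Real.dist_eq, sub_zero] at ht; exact ht.le
  obtain ⟨A, hA⟩ := h1.exists_forall_of_atTop
  obtain ⟨B, hB⟩ := h2.exists_forall_of_atBot
  obtain ⟨C0, hC0⟩ := (isCompact_Icc (a := min A B) (b := max A B)).exists_bound_of_continuousOn
    hgc.continuousOn
  refine ⟨max 1 C0, le_trans zero_le_one (le_max_left _ _), fun t => ?_⟩
  have habs : |g t| = |Q.eval t| * Real.exp (-(c * t ^ 2)) := by
    rw [hg, abs_mul, Real.abs_exp]
  rw [← habs]
  rcases le_or_gt t (min A B) with h | h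
  · rcases le_or_gt A t with h' | h'
    · exact le_trans (hA t h') (le_max_left _ _)
    · exact le_trans (hB t (le_trans h (min_le_right _ _))) (le_max_left _ _)
  rcases le_or_gt (max A B) t with h' | h'
  · exact le_trans (hA t (le_trans (le_max_left _ _) h')) (le_max_left _ _)
  · have := hC0 t ⟨h.le, h'.le⟩
    rw [Real.norm_eq_abs] at this
    exact le_trans this (le_max_right _ _)

/-- The basic class of functions: polynomial times Gaussian. -/
noncomputable def fQ (ε : ℝ) (Q : ℝ[X]) (t : ℝ) : ℝ := Q.eval t * Real.exp (-t ^ 2 / (2 * ε))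

noncomputable def Qd (ε : ℝ) (Q : ℝ[X]) : ℝ[X] := derivative Q - C ε⁻¹ * (X * Q)

theorem continuous_fQ (ε : ℝ) (Q : ℝ[X]) : Continuous (fQ ε Q) :=
  (Q.continuous).mul (Real.continuous_exp.comp (by continuity))

theorem hasDerivAt_fQ {ε : ℝ} (hε : 0 < ε) (Q : ℝ[X]) (t : ℝ) :
    HasDerivAt (fQ ε Q) (fQ ε (Qd ε Q) t) t := by
  have hexp : HasDerivAt (fun t : ℝ => Real.exp (-t ^ 2 / (2 * ε)))
      ((-t / ε) * Real.exp (-t ^ 2 / (2 * ε))) t := by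
    have h1 : HasDerivAt (fun t : ℝ => -t ^ 2 / (2 * ε)) (-t / ε) t := by
      have := ((hasDerivAt_pow 2 t).fun_neg).div_const (2 * ε)
      refine this.congr_deriv ?_
      field_simp
      ring
    simpa [mul_comm] using h1.exp
  have := (Q.hasDerivAt t).fun_mul hexp
  refine this.congr_deriv ?_
  simp only [fQ, Qd, eval_sub, eval_mul, eval_C, eval_X]
  field_simp
  ring

theorem fQ_bound {ε : ℝ} (hε : 0 < ε) (Q : ℝ[X]) :
    ∃ C : ℝ, 0 ≤ C ∧ ∀ t, |fQ ε Q t| ≤ C * Real.exp (-((4 * ε)⁻¹ * t ^ 2)) := by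
  obtain ⟨C, hC0, hC⟩ := poly_gauss_bdd (c := (4 * ε)⁻¹) (by positivity) Q
  refine ⟨C, hC0, fun t => ?_⟩
  have key : Real.exp (-t ^ 2 / (2 * ε))
      = Real.exp (-((4 * ε)⁻¹ * t ^ 2)) * Real.exp (-((4 * ε)⁻¹ * t ^ 2)) := by
    rw [← Real.exp_add]
    congr 1
    field_simp
    ring
  rw [fQ, abs_mul, Real.abs_exp, key, ← mul_assoc]
  have h1 : |Q.eval t| * Real.exp (-((4 * ε)⁻¹ * t ^ 2)) ≤ C := hC t
  exact mul_le_mul_of_nonneg_right h1 (Real.exp_pos _).le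

theorem integrable_of_gauss_bound {f : ℝ → ℂ} {c C : ℝ} (hc : 0 < c)
    (hf : Continuous f) (h : ∀ y, ‖f y‖ ≤ C * Real.exp (-(c * y ^ 2))) : Integrable f := by
  have : Integrable (fun y : ℝ => C * Real.exp (-(c * y ^ 2))) := by
    simpa [neg_mul] using (integrable_exp_neg_mul_sq hc).const_mul C
  exact this.mono' hf.aestronglyMeasurable (ae_of_all _ h)

theorem tendsto_gauss_atTop {c C : ℝ} (hc : 0 < c) :
    Tendsto (fun y : ℝ => C * Real.exp (-(c * y ^ 2))) atTop (𝓝 0) := by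
  have h0 : Tendsto (fun y : ℝ => c * y ^ 2) atTop atTop :=
    (tendsto_pow_atTop two_ne_zero).const_mul_atTop hc
  have h1 : Tendsto (fun y : ℝ => -(c * y ^ 2)) atTop atBot := tendsto_neg_atTop_atBot.comp h0
  have := (Real.tendsto_exp_atBot.comp h1).const_mul C
  simpa [Function.comp] using this

theorem tendsto_gauss_atBot {c C : ℝ} (hc : 0 < c) :
    Tendsto (fun y : ℝ => C * Real.exp (-(c * y ^ 2))) atBot (𝓝 0) := by
  have h0 : Tendsto (fun y : ℝ => c * y ^ 2) atBot atTop := by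
    have h2 : Tendsto (fun y : ℝ => y ^ 2) atBot atTop := by
      have := (tendsto_pow_atTop (two_ne_zero)).comp (tendsto_neg_atBot_atTop : Tendsto (fun y : ℝ => -y) atBot atTop)
      convert this using 2 with y
      simp [Function.comp]
    exact h2.const_mul_atTop hc
  have h1 : Tendsto (fun y : ℝ => -(c * y ^ 2)) atBot atBot := tendsto_neg_atTop_atBot.comp h0
  have := (Real.tendsto_exp_atBot.comp h1).const_mul C
  simpa [Function.comp] using this

/-- ∫ over ℝ of a derivative vanishes when the function tends to 0 at ±∞. -/
theorem integral_deriv_eq_zero' {h h' : ℝ → ℂ} (hd : ∀ t, HasDerivAt h (h' t) t)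
    (hi : Integrable h') (htop : Tendsto h atTop (𝓝 0)) (hbot : Tendsto h atBot (𝓝 0)) :
    ∫ t, h' t = 0 := by
  rw [← intervalIntegral.integral_Iic_add_Ioi (b := (0:ℝ)) hi.integrableOn hi.integrableOn]
  rw [integral_Iic_of_hasDerivAt_of_tendsto (hd 0).continuousAt.continuousWithinAt
    (fun x _ => hd x) hi.integrableOn hbot]
  rw [integral_Ioi_of_hasDerivAt_of_tendsto (hd 0).continuousAt.continuousWithinAt
    (fun x _ => hd x) hi.integrableOn htop]
  ring

theorem hasDerivAt_cexp_mul (c : ℂ) (t : ℝ) :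
    HasDerivAt (fun s : ℝ => Complex.exp (c * s)) (c * Complex.exp (c * t)) t := by
  have h1 : HasDerivAt (fun z : ℂ => Complex.exp (c * z)) (c * Complex.exp (c * t)) (t : ℂ) := by
    have := ((hasDerivAt_id (t : ℂ)).const_mul c).cexp
    simpa [mul_comm] using this
  exact h1.comp_ofReal

/-! ### Hermite functions as fQ -/

noncomputable def hermPoly (ε : ℝ) (n : ℕ) : ℝ[X] :=
  C ((Real.pi * ε) ^ (-(1 / 4 : ℝ)) * ((2 : ℝ) ^ n * (n.factorial : ℝ)) ^ (-(1 / 2 : ℝ))) *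
    (herm n).comp (C (Real.sqrt ε)⁻¹ * X)

theorem hermiteFun_eq_fQ (ε : ℝ) (n : ℕ) : hermiteFun ε n = fQ ε (hermPoly ε n) := by
  funext t
  rw [hermiteFun, fQ, hermPoly, hermitePoly_eq, eval_mul, eval_C, eval_comp, eval_mul, eval_C,
    eval_X, div_eq_inv_mul]
  ring

theorem scalar_ode {ε a t A B Cc c : ℝ} (n : ℕ) (ha : ε * a ^ 2 = 1)
    (hode : Cc - 2 * (a * t) * B + 2 * n * A = 0) :
    ε ^ 2 * (c * a ^ 2 * Cc - ε⁻¹ * (c * A + t * (c * a * B))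
        - ε⁻¹ * t * (c * a * B - ε⁻¹ * t * (c * A)))
      = (t ^ 2 - (2 * n + 1) * ε) * (c * A) := by
  have hε : ε ≠ 0 := by intro h; rw [h] at ha; simp at ha
  have hinv : ε⁻¹ = a ^ 2 := by field_simp; linarith [ha]
  rw [hinv]
  linear_combination (ε ^ 2 * c * a ^ 2) * hode +
    (t ^ 2 * c * A * (ε * a ^ 2 + 1) - (2 * n + 1) * ε * c * A) * ha

theorem derivative_C_mul_comp (c a : ℝ) (H : ℝ[X]) :
    derivative (C c * H.comp (C a * X)) = C (c * a) * (derivative H).comp (C a * X) := by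
  rw [derivative_mul, derivative_C, zero_mul, zero_add, derivative_comp, derivative_mul,
    derivative_C, zero_mul, zero_add, derivative_X, mul_one, C_mul]
  ring

theorem deriv1_hermPoly (ε : ℝ) (n : ℕ) :
    derivative (hermPoly ε n)
      = C (((Real.pi * ε) ^ (-(1 / 4 : ℝ)) * ((2 : ℝ) ^ n * (n.factorial : ℝ)) ^ (-(1 / 2 : ℝ)))
          * (Real.sqrt ε)⁻¹) * (derivative (herm n)).comp (C (Real.sqrt ε)⁻¹ * X) :=
  derivative_C_mul_comp _ _ _

theorem deriv2_hermPoly (ε : ℝ) (n : ℕ) :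
    derivative (derivative (hermPoly ε n))
      = C (((Real.pi * ε) ^ (-(1 / 4 : ℝ)) * ((2 : ℝ) ^ n * (n.factorial : ℝ)) ^ (-(1 / 2 : ℝ)))
          * (Real.sqrt ε)⁻¹ * (Real.sqrt ε)⁻¹)
        * (derivative (derivative (herm n))).comp (C (Real.sqrt ε)⁻¹ * X) := by
  rw [deriv1_hermPoly, derivative_C_mul_comp]

theorem eval_hermPoly (ε : ℝ) (n : ℕ) (t : ℝ) :
    (hermPoly ε n).eval t
      = ((Real.pi * ε) ^ (-(1 / 4 : ℝ)) * ((2 : ℝ) ^ n * (n.factorial : ℝ)) ^ (-(1 / 2 : ℝ)))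
        * (herm n).eval ((Real.sqrt ε)⁻¹ * t) := by
  rw [hermPoly, eval_mul, eval_C, eval_comp, eval_mul, eval_C, eval_X]

theorem eval_Qd (ε : ℝ) (Q : ℝ[X]) (t : ℝ) :
    (Qd ε Q).eval t = (derivative Q).eval t - ε⁻¹ * (t * Q.eval t) := by
  simp [Qd]

theorem deriv_Qd (ε : ℝ) (Q : ℝ[X]) :
    derivative (Qd ε Q) = derivative (derivative Q) - C ε⁻¹ * (Q + X * derivative Q) := by
  simp only [Qd, derivative_sub, derivative_mul, derivative_C, zero_mul, zero_add, derivative_X]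
  ring

/-- The harmonic oscillator eigenvalue ODE for the Hermite functions. -/
theorem hermite_ode {ε : ℝ} (hε : 0 < ε) (n : ℕ) (t : ℝ) :
    ε ^ 2 * fQ ε (Qd ε (Qd ε (hermPoly ε n))) t
      = (t ^ 2 - (2 * n + 1) * ε) * fQ ε (hermPoly ε n) t := by
  set a : ℝ := (Real.sqrt ε)⁻¹ with ha_def
  set c : ℝ := (Real.pi * ε) ^ (-(1 / 4 : ℝ)) * ((2 : ℝ) ^ n * (n.factorial : ℝ)) ^ (-(1 / 2 : ℝ))
    with hc_def
  have hsq : Real.sqrt ε ^ 2 = ε := Real.sq_sqrt hε.le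
  have hsne : Real.sqrt ε ≠ 0 := by positivity
  have ha : ε * a ^ 2 = 1 := by rw [ha_def, inv_pow, ← hsq]; field_simp; rw [Real.sqrt_sq (Real.sqrt_nonneg _)]
  have hode : (derivative (derivative (herm n))).eval (a * t)
      - 2 * (a * t) * (derivative (herm n)).eval (a * t)
      + 2 * n * (herm n).eval (a * t) = 0 := by
    have h0 := congrArg (eval (a * t)) (herm_ode n)
    simp only [eval_add, eval_sub, eval_mul, eval_C, eval_X, eval_zero] at h0
    linarith
  have key : ε ^ 2 * (Qd ε (Qd ε (hermPoly ε n))).eval t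
      = (t ^ 2 - (2 * n + 1) * ε) * (hermPoly ε n).eval t := by
    rw [eval_Qd, deriv_Qd, eval_sub, eval_mul, eval_C, eval_add, eval_mul, eval_X, eval_Qd,
      deriv2_hermPoly, deriv1_hermPoly, eval_mul, eval_C, eval_comp, eval_mul, eval_C, eval_X,
      eval_mul, eval_C, eval_comp, eval_mul, eval_C, eval_X, eval_hermPoly]
    rw [← hc_def, ← ha_def]
    have hs := scalar_ode (ε := ε) (a := a) (t := t) (c := c)
      (A := (herm n).eval (a * t)) (B := (derivative (herm n)).eval (a * t))
      (Cc := (derivative (derivative (herm n))).eval (a * t)) n ha hode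
    linear_combination hs
  have key2 := congrArg (fun r => r * Real.exp (-t ^ 2 / (2 * ε))) key
  simp only [fQ]
  linear_combination key2

/-! ### The integrand and its properties -/

noncomputable def Kf (ε p y : ℝ) : ℂ := Complex.exp (-Complex.I * (p : ℂ) * (y : ℂ) / (ε : ℂ))

noncomputable def Gf (ε : ℝ) (Q R : ℝ[X]) (x p y : ℝ) : ℂ :=
  Kf ε p y * ((fQ ε Q (x + y / 2) : ℝ) : ℂ) * ((fQ ε R (x - y / 2) : ℝ) : ℂ)

theorem norm_Kf (ε p y : ℝ) : ‖Kf ε p y‖ = 1 := by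
  rw [Kf, show -Complex.I * (p : ℂ) * (y : ℂ) / (ε : ℂ) = ((-(p * y / ε) : ℝ) : ℂ) * Complex.I by
    push_cast; ring, Complex.norm_exp_ofReal_mul_I]

theorem continuous_Kf (ε p : ℝ) : Continuous (fun y => Kf ε p y) := by
  unfold Kf
  fun_prop

theorem continuous_Gf (ε : ℝ) (Q R : ℝ[X]) (x p : ℝ) : Continuous (Gf ε Q R x p) := by
  apply Continuous.mul
  apply Continuous.mul (continuous_Kf ε p)
  · exact Complex.continuous_ofReal.comp ((continuous_fQ ε Q).comp (by continuity))
  · exact Complex.continuous_ofReal.comp ((continuous_fQ ε R).comp (by continuity))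

theorem norm_Gf_le {ε : ℝ} (hε : 0 < ε) {Q R : ℝ[X]} {CQ CR : ℝ} (hCQ : 0 ≤ CQ) (hCR : 0 ≤ CR)
    (hQ : ∀ t, |fQ ε Q t| ≤ CQ * Real.exp (-((4 * ε)⁻¹ * t ^ 2)))
    (hR : ∀ t, |fQ ε R t| ≤ CR * Real.exp (-((4 * ε)⁻¹ * t ^ 2))) (x p y : ℝ) :
    ‖Gf ε Q R x p y‖ ≤ CQ * CR * Real.exp (-((8 * ε)⁻¹ * y ^ 2)) := by
  rw [Gf, norm_mul, norm_mul, norm_Kf, one_mul, Complex.norm_real, Complex.norm_real,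
    Real.norm_eq_abs, Real.norm_eq_abs]
  calc |fQ ε Q (x + y / 2)| * |fQ ε R (x - y / 2)|
      ≤ (CQ * Real.exp (-((4 * ε)⁻¹ * (x + y / 2) ^ 2)))
        * (CR * Real.exp (-((4 * ε)⁻¹ * (x - y / 2) ^ 2))) :=
        mul_le_mul (hQ _) (hR _) (abs_nonneg _) (by positivity)
    _ = CQ * CR * (Real.exp (-((4 * ε)⁻¹ * (x + y / 2) ^ 2))
        * Real.exp (-((4 * ε)⁻¹ * (x - y / 2) ^ 2))) := by ring
    _ ≤ CQ * CR * Real.exp (-((8 * ε)⁻¹ * y ^ 2)) := by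
        apply mul_le_mul_of_nonneg_left _ (by positivity)
        rw [← Real.exp_add]
        apply Real.exp_le_exp.2
        have h1 : (4 * ε)⁻¹ = 2 * (8 * ε)⁻¹ := by
          rw [show (8 : ℝ) * ε = 2 * (4 * ε) by ring, mul_inv]
          field_simp
        have h2 : (0:ℝ) ≤ (8 * ε)⁻¹ := by positivity
        nlinarith [sq_nonneg x, mul_nonneg h2 (sq_nonneg x)]

theorem integrable_Gf {ε : ℝ} (hε : 0 < ε) (Q R : ℝ[X]) (x p : ℝ) :
    Integrable (Gf ε Q R x p) := by
  obtain ⟨CQ, hCQ, hQ⟩ := fQ_bound hε Q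
  obtain ⟨CR, hCR, hR⟩ := fQ_bound hε R
  exact integrable_of_gauss_bound (by positivity) (continuous_Gf ε Q R x p)
    (fun y => norm_Gf_le hε hCQ hCR hQ hR x p y)

theorem integrable_mul_Gf {ε : ℝ} (hε : 0 < ε) (Q R : ℝ[X]) (x p : ℝ) :
    Integrable (fun y : ℝ => (y : ℂ) * Gf ε Q R x p y) := by
  obtain ⟨CQ, hCQ, hQ⟩ := fQ_bound hε Q
  obtain ⟨CR, hCR, hR⟩ := fQ_bound hε R
  obtain ⟨C1, hC1, h1⟩ := poly_gauss_bdd (c := (16 * ε)⁻¹) (by positivity) (X : ℝ[X])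
  apply integrable_of_gauss_bound (c := (16 * ε)⁻¹) (C := C1 * (CQ * CR)) (by positivity)
  · exact Complex.continuous_ofReal.mul (continuous_Gf ε Q R x p)
  intro y
  rw [norm_mul, Complex.norm_real, Real.norm_eq_abs]
  have key : Real.exp (-((8 * ε)⁻¹ * y ^ 2))
      = Real.exp (-((16 * ε)⁻¹ * y ^ 2)) * Real.exp (-((16 * ε)⁻¹ * y ^ 2)) := by
    rw [← Real.exp_add]
    congr 1
    rw [show (16 : ℝ) * ε = 2 * (8 * ε) by ring, mul_inv]
    field_simp
    ring
  calc |y| * ‖Gf ε Q R x p y‖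
      ≤ |y| * (CQ * CR * Real.exp (-((8 * ε)⁻¹ * y ^ 2))) :=
        mul_le_mul_of_nonneg_left (norm_Gf_le hε hCQ hCR hQ hR x p y) (abs_nonneg _)
    _ = (|y| * Real.exp (-((16 * ε)⁻¹ * y ^ 2))) * (CQ * CR)
        * Real.exp (-((16 * ε)⁻¹ * y ^ 2)) := by rw [key]; ring
    _ ≤ C1 * (CQ * CR) * Real.exp (-((16 * ε)⁻¹ * y ^ 2)) := by
        apply mul_le_mul_of_nonneg_right _ (Real.exp_pos _).le
        apply mul_le_mul_of_nonneg_right _ (by positivity)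
        simpa using h1 y

/-! ### Derivatives of the integrand -/

theorem hasDerivAt_Kf_p (ε p y : ℝ) :
    HasDerivAt (fun p' : ℝ => Kf ε p' y) ((-Complex.I * y / ε) * Kf ε p y) p := by
  have h := hasDerivAt_cexp_mul (-Complex.I * (y : ℂ) / (ε : ℂ)) p
  have hfun : (fun p' : ℝ => Complex.exp (-Complex.I * (y : ℂ) / (ε : ℂ) * (p' : ℂ)))
      = fun p' : ℝ => Kf ε p' y := by
    funext p'
    rw [Kf]
    congr 1
    ring
  rw [hfun] at h
  convert h using 1
  rw [Kf]
  congr 2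
  ring

theorem hasDerivAt_Kf_y (ε p y : ℝ) :
    HasDerivAt (fun y' : ℝ => Kf ε p y') ((-Complex.I * p / ε) * Kf ε p y) y := by
  have h := hasDerivAt_cexp_mul (-Complex.I * (p : ℂ) / (ε : ℂ)) y
  have hfun : (fun y' : ℝ => Complex.exp (-Complex.I * (p : ℂ) / (ε : ℂ) * (y' : ℂ)))
      = fun y' : ℝ => Kf ε p y' := by
    funext y'
    rw [Kf]
    congr 1
    ring
  rw [hfun] at h
  convert h using 1
  rw [Kf]
  congr 2
  ring

/-- Derivative of the coerced `fQ` along `x' ↦ x' + y/2`. -/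
theorem hasDerivAt_fQC_plus {ε : ℝ} (hε : 0 < ε) (Q : ℝ[X]) (c x : ℝ) :
    HasDerivAt (fun x' : ℝ => ((fQ ε Q (x' + c) : ℝ) : ℂ)) ((fQ ε (Qd ε Q) (x + c) : ℝ) : ℂ) x := by
  have h1 : HasDerivAt (fun x' : ℝ => fQ ε Q (x' + c)) (fQ ε (Qd ε Q) (x + c)) x := by
    have := (hasDerivAt_fQ hε Q (x + c)).comp x ((hasDerivAt_id x).add_const c)
    simpa [Function.comp_def] using this
  exact h1.ofReal_comp

theorem hasDerivAt_fQC_half {ε : ℝ} (hε : 0 < ε) (Q : ℝ[X]) (x y : ℝ) :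
    HasDerivAt (fun y' : ℝ => ((fQ ε Q (x + y' / 2) : ℝ) : ℂ))
      ((1 / 2 : ℂ) * ((fQ ε (Qd ε Q) (x + y / 2) : ℝ) : ℂ)) y := by
  have h1 : HasDerivAt (fun y' : ℝ => fQ ε Q (x + y' / 2)) ((1 / 2) * fQ ε (Qd ε Q) (x + y / 2)) y := by
    have h2 : HasDerivAt (fun y' : ℝ => x + y' / 2) (1 / 2 : ℝ) y := by
      simpa using ((hasDerivAt_id y).div_const 2).const_add x
    have := (hasDerivAt_fQ hε Q (x + y / 2)).comp y h2
    simpa [mul_comm, Function.comp_def] using this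
  have := h1.ofReal_comp
  convert this using 1
  push_cast
  ring

theorem hasDerivAt_fQC_mhalf {ε : ℝ} (hε : 0 < ε) (Q : ℝ[X]) (x y : ℝ) :
    HasDerivAt (fun y' : ℝ => ((fQ ε Q (x - y' / 2) : ℝ) : ℂ))
      (-(1 / 2 : ℂ) * ((fQ ε (Qd ε Q) (x - y / 2) : ℝ) : ℂ)) y := by
  have h1 : HasDerivAt (fun y' : ℝ => fQ ε Q (x - y' / 2)) (-(1 / 2) * fQ ε (Qd ε Q) (x - y / 2)) y := by
    have h2 : HasDerivAt (fun y' : ℝ => x - y' / 2) (-(1 / 2) : ℝ) y := by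
      simpa using ((hasDerivAt_id y).div_const 2).const_sub x
    have := (hasDerivAt_fQ hε Q (x - y / 2)).comp y h2
    simpa [mul_comm, Function.comp_def] using this
  have := h1.ofReal_comp
  convert this using 1
  push_cast
  ring

/-- `x`-derivative of the integrand. -/
theorem hasDerivAt_Gf_x {ε : ℝ} (hε : 0 < ε) (Q R : ℝ[X]) (x p y : ℝ) :
    HasDerivAt (fun x' : ℝ => Gf ε Q R x' p y)
      (Gf ε (Qd ε Q) R x p y + Gf ε Q (Qd ε R) x p y) x := by
  have hv := hasDerivAt_fQC_plus hε Q (y / 2) x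
  have hw : HasDerivAt (fun x' : ℝ => ((fQ ε R (x' - y / 2) : ℝ) : ℂ))
      ((fQ ε (Qd ε R) (x - y / 2) : ℝ) : ℂ) x := by
    have := hasDerivAt_fQC_plus hε R (-(y / 2)) x
    simp only [← sub_eq_add_neg] at this
    exact this
  exact (hv.const_mul (Kf ε p y)).mul hw

/-- `p`-derivative of the integrand. -/
theorem hasDerivAt_Gf_p {ε : ℝ} (hε : 0 < ε) (Q R : ℝ[X]) (x p y : ℝ) :
    HasDerivAt (fun p' : ℝ => Gf ε Q R x p' y)
      ((-Complex.I * y / ε) * Gf ε Q R x p y) p := by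
  have hK := hasDerivAt_Kf_p ε p y
  have := (hK.mul_const ((fQ ε Q (x + y / 2) : ℝ) : ℂ)).mul_const ((fQ ε R (x - y / 2) : ℝ) : ℂ)
  refine this.congr_deriv ?_
  simp only [Gf]
  ring

/-- `y`-derivative of the integrand. -/
theorem hasDerivAt_Gf_y {ε : ℝ} (hε : 0 < ε) (Q R : ℝ[X]) (x p y : ℝ) :
    HasDerivAt (fun y' : ℝ => Gf ε Q R x p y')
      ((-Complex.I * p / ε) * Gf ε Q R x p y
        + ((1 / 2 : ℂ) * Gf ε (Qd ε Q) R x p y - (1 / 2 : ℂ) * Gf ε Q (Qd ε R) x p y)) y := by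
  have hK := hasDerivAt_Kf_y ε p y
  have hv := hasDerivAt_fQC_half hε Q x y
  have hw := hasDerivAt_fQC_mhalf hε R x y
  have := (hK.fun_mul hv).fun_mul hw
  refine this.congr_deriv ?_
  simp only [Gf]
  ring

/-! ### Differentiation under the integral sign -/

theorem hasDerivAt_integral_x {ε : ℝ} (hε : 0 < ε) (Q R : ℝ[X]) (x p : ℝ) :
    HasDerivAt (fun x' : ℝ => ∫ y : ℝ, Gf ε Q R x' p y)
      (∫ y : ℝ, (Gf ε (Qd ε Q) R x p y + Gf ε Q (Qd ε R) x p y)) x := by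
  obtain ⟨CQ, hCQ, hQ⟩ := fQ_bound hε Q
  obtain ⟨CR, hCR, hR⟩ := fQ_bound hε R
  obtain ⟨C1, hC1, h1⟩ := fQ_bound hε (Qd ε Q)
  obtain ⟨C2, hC2, h2⟩ := fQ_bound hε (Qd ε R)
  have key := hasDerivAt_integral_of_dominated_loc_of_deriv_le (μ := MeasureTheory.volume)
    (F := fun x' (y : ℝ) => Gf ε Q R x' p y)
    (F' := fun x' (y : ℝ) => Gf ε (Qd ε Q) R x' p y + Gf ε Q (Qd ε R) x' p y)
    (x₀ := x) (s := Metric.ball x 1)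
    (bound := fun y => (C1 * CR + CQ * C2) * Real.exp (-((8 * ε)⁻¹ * y ^ 2)))
    (Metric.ball_mem_nhds x one_pos)
    (Filter.Eventually.of_forall fun x' => (continuous_Gf ε Q R x' p).aestronglyMeasurable)
    (integrable_Gf hε Q R x p)
    (((continuous_Gf ε (Qd ε Q) R x p).add (continuous_Gf ε Q (Qd ε R) x p)).aestronglyMeasurable)
    (MeasureTheory.ae_of_all _ fun y => fun x' _ => by
      calc ‖Gf ε (Qd ε Q) R x' p y + Gf ε Q (Qd ε R) x' p y‖
          ≤ ‖Gf ε (Qd ε Q) R x' p y‖ + ‖Gf ε Q (Qd ε R) x' p y‖ := norm_add_le _ _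
        _ ≤ C1 * CR * Real.exp (-((8 * ε)⁻¹ * y ^ 2))
            + CQ * C2 * Real.exp (-((8 * ε)⁻¹ * y ^ 2)) :=
            add_le_add (norm_Gf_le hε hC1 hCR h1 hR x' p y) (norm_Gf_le hε hCQ hC2 hQ h2 x' p y)
        _ = (C1 * CR + CQ * C2) * Real.exp (-((8 * ε)⁻¹ * y ^ 2)) := by ring)
    (by simpa [neg_mul] using
      (integrable_exp_neg_mul_sq (by positivity : (0:ℝ) < (8 * ε)⁻¹)).const_mul (C1 * CR + CQ * C2))
    (MeasureTheory.ae_of_all _ fun y => fun x' _ => hasDerivAt_Gf_x hε Q R x' p y)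
  exact key.2

theorem hasDerivAt_integral_p {ε : ℝ} (hε : 0 < ε) (Q R : ℝ[X]) (x p : ℝ) :
    HasDerivAt (fun p' : ℝ => ∫ y : ℝ, Gf ε Q R x p' y)
      (∫ y : ℝ, (-Complex.I * y / ε) * Gf ε Q R x p y) p := by
  obtain ⟨CQ, hCQ, hQ⟩ := fQ_bound hε Q
  obtain ⟨CR, hCR, hR⟩ := fQ_bound hε R
  obtain ⟨C1, hC1, h1⟩ := poly_gauss_bdd (c := (16 * ε)⁻¹) (by positivity) (X : ℝ[X])
  have key16 : ∀ y : ℝ, Real.exp (-((8 * ε)⁻¹ * y ^ 2))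
      = Real.exp (-((16 * ε)⁻¹ * y ^ 2)) * Real.exp (-((16 * ε)⁻¹ * y ^ 2)) := by
    intro y
    rw [← Real.exp_add]
    congr 1
    rw [show (16 : ℝ) * ε = 2 * (8 * ε) by ring, mul_inv]
    field_simp
    ring
  have hmeas : ∀ p' : ℝ, MeasureTheory.AEStronglyMeasurable
      (fun y : ℝ => (-Complex.I * y / ε) * Gf ε Q R x p' y) MeasureTheory.volume := by
    intro p'
    exact ((by fun_prop : Continuous fun y : ℝ => -Complex.I * (y : ℂ) / (ε : ℂ)).mul
      (continuous_Gf ε Q R x p')).aestronglyMeasurable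
  have hbd : ∀ (y : ℝ), ∀ p' ∈ Metric.ball p 1, ‖(-Complex.I * y / ε) * Gf ε Q R x p' y‖
      ≤ ε⁻¹ * (CQ * CR) * C1 * Real.exp (-((16 * ε)⁻¹ * y ^ 2)) := by
    intro y p' _
    have hnorm : ‖(-Complex.I * (y:ℂ) / (ε:ℂ))‖ = |y| / ε := by
      rw [norm_div, norm_mul, norm_neg, Complex.norm_I, one_mul, Complex.norm_real,
        Complex.norm_real, Real.norm_eq_abs, Real.norm_eq_abs, abs_of_pos hε]
    calc ‖(-Complex.I * y / ε) * Gf ε Q R x p' y‖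
        = |y| / ε * ‖Gf ε Q R x p' y‖ := by rw [norm_mul, hnorm]
      _ ≤ |y| / ε * (CQ * CR * Real.exp (-((8 * ε)⁻¹ * y ^ 2))) := by
          apply mul_le_mul_of_nonneg_left (norm_Gf_le hε hCQ hCR hQ hR x p' y) (by positivity)
      _ = ε⁻¹ * (CQ * CR) * (|y| * Real.exp (-((16 * ε)⁻¹ * y ^ 2)))
          * Real.exp (-((16 * ε)⁻¹ * y ^ 2)) := by rw [key16 y]; ring
      _ ≤ ε⁻¹ * (CQ * CR) * C1 * Real.exp (-((16 * ε)⁻¹ * y ^ 2)) := by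
          apply mul_le_mul_of_nonneg_right _ (Real.exp_pos _).le
          apply mul_le_mul_of_nonneg_left _ (by positivity)
          simpa using h1 y
  have hbint : Integrable
      (fun y : ℝ => ε⁻¹ * (CQ * CR) * C1 * Real.exp (-((16 * ε)⁻¹ * y ^ 2))) := by
    have h0 := (integrable_exp_neg_mul_sq (by positivity : (0:ℝ) < (16 * ε)⁻¹)).const_mul
      (ε⁻¹ * (CQ * CR) * C1)
    simpa [neg_mul] using h0
  have key := hasDerivAt_integral_of_dominated_loc_of_deriv_le (μ := MeasureTheory.volume)
    (F := fun p' (y : ℝ) => Gf ε Q R x p' y)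
    (F' := fun p' (y : ℝ) => (-Complex.I * y / ε) * Gf ε Q R x p' y)
    (x₀ := p) (s := Metric.ball p 1)
    (bound := fun y => ε⁻¹ * (CQ * CR) * C1 * Real.exp (-((16 * ε)⁻¹ * y ^ 2)))
    (Metric.ball_mem_nhds p one_pos)
    (Filter.Eventually.of_forall fun p' => (continuous_Gf ε Q R x p').aestronglyMeasurable)
    (integrable_Gf hε Q R x p)
    (hmeas p)
    (MeasureTheory.ae_of_all _ hbd)
    hbint
    (MeasureTheory.ae_of_all _ fun y => fun p' _ => hasDerivAt_Gf_p hε Q R x p' y)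
  exact key.2

/-! ### Integration by parts -/

theorem ibp_eq_zero {ε : ℝ} (hε : 0 < ε) (Q R : ℝ[X]) (x p : ℝ) :
    ∫ y : ℝ, ((-Complex.I * p / ε) * (Gf ε (Qd ε Q) R x p y + Gf ε Q (Qd ε R) x p y)
      + ((1 / 2 : ℂ) * Gf ε (Qd ε (Qd ε Q)) R x p y
        - (1 / 2 : ℂ) * Gf ε Q (Qd ε (Qd ε R)) x p y)) = 0 := by
  obtain ⟨CQ, hCQ, hQ⟩ := fQ_bound hε Q
  obtain ⟨CR, hCR, hR⟩ := fQ_bound hε R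
  obtain ⟨C1, hC1, h1⟩ := fQ_bound hε (Qd ε Q)
  obtain ⟨C2, hC2, h2⟩ := fQ_bound hε (Qd ε R)
  apply integral_deriv_eq_zero'
    (h := fun y => Gf ε (Qd ε Q) R x p y + Gf ε Q (Qd ε R) x p y)
  · intro y
    have h0 := (hasDerivAt_Gf_y hε (Qd ε Q) R x p y).add (hasDerivAt_Gf_y hε Q (Qd ε R) x p y)
    have heq : (-Complex.I * p / ε) * Gf ε (Qd ε Q) R x p y
        + ((1 / 2 : ℂ) * Gf ε (Qd ε (Qd ε Q)) R x p y - (1 / 2 : ℂ) * Gf ε (Qd ε Q) (Qd ε R) x p y)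
        + ((-Complex.I * p / ε) * Gf ε Q (Qd ε R) x p y
          + ((1 / 2 : ℂ) * Gf ε (Qd ε Q) (Qd ε R) x p y
            - (1 / 2 : ℂ) * Gf ε Q (Qd ε (Qd ε R)) x p y))
        = (-Complex.I * p / ε) * (Gf ε (Qd ε Q) R x p y + Gf ε Q (Qd ε R) x p y)
          + ((1 / 2 : ℂ) * Gf ε (Qd ε (Qd ε Q)) R x p y
            - (1 / 2 : ℂ) * Gf ε Q (Qd ε (Qd ε R)) x p y) := by ring
    exact heq ▸ h0
  · exact (((integrable_Gf hε (Qd ε Q) R x p).add (integrable_Gf hε Q (Qd ε R) x p)).const_mul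
      _).add (((integrable_Gf hε (Qd ε (Qd ε Q)) R x p).const_mul _).sub
        ((integrable_Gf hε Q (Qd ε (Qd ε R)) x p).const_mul _))
  · apply squeeze_zero_norm (a := fun y => (C1 * CR + CQ * C2) * Real.exp (-((8 * ε)⁻¹ * y ^ 2)))
    · intro y
      calc ‖Gf ε (Qd ε Q) R x p y + Gf ε Q (Qd ε R) x p y‖
          ≤ ‖Gf ε (Qd ε Q) R x p y‖ + ‖Gf ε Q (Qd ε R) x p y‖ := norm_add_le _ _
        _ ≤ C1 * CR * Real.exp (-((8 * ε)⁻¹ * y ^ 2))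
            + CQ * C2 * Real.exp (-((8 * ε)⁻¹ * y ^ 2)) :=
            add_le_add (norm_Gf_le hε hC1 hCR h1 hR x p y) (norm_Gf_le hε hCQ hC2 hQ h2 x p y)
        _ = (C1 * CR + CQ * C2) * Real.exp (-((8 * ε)⁻¹ * y ^ 2)) := by ring
    · exact tendsto_gauss_atTop (by positivity)
  · apply squeeze_zero_norm (a := fun y => (C1 * CR + CQ * C2) * Real.exp (-((8 * ε)⁻¹ * y ^ 2)))
    · intro y
      calc ‖Gf ε (Qd ε Q) R x p y + Gf ε Q (Qd ε R) x p y‖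
          ≤ ‖Gf ε (Qd ε Q) R x p y‖ + ‖Gf ε Q (Qd ε R) x p y‖ := norm_add_le _ _
        _ ≤ C1 * CR * Real.exp (-((8 * ε)⁻¹ * y ^ 2))
            + CQ * C2 * Real.exp (-((8 * ε)⁻¹ * y ^ 2)) :=
            add_le_add (norm_Gf_le hε hC1 hCR h1 hR x p y) (norm_Gf_le hε hCQ hC2 hQ h2 x p y)
        _ = (C1 * CR + CQ * C2) * Real.exp (-((8 * ε)⁻¹ * y ^ 2)) := by ring
    · exact tendsto_gauss_atBot (by positivity)

theorem cx_ode {ε x y : ℝ} (hε : 0 < ε) {n m : ℕ} {va wb v2a w2b : ℝ}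
    (h1 : ε ^ 2 * v2a = ((x + y / 2) ^ 2 - (2 * n + 1) * ε) * va)
    (h2 : ε ^ 2 * w2b = ((x - y / 2) ^ 2 - (2 * m + 1) * ε) * wb) :
    (-Complex.I * ε / 2) * ((v2a : ℂ) * wb - (va : ℂ) * w2b)
      + (Complex.I * x / ε) * ((y : ℂ) * ((va : ℂ) * wb))
      = Complex.I * ((n : ℂ) - m) * ((va : ℂ) * wb) := by
  have hεc : (ε : ℂ) ≠ 0 := Complex.ofReal_ne_zero.2 hε.ne'
  have h1c := congrArg (Complex.ofReal) h1
  have h2c := congrArg (Complex.ofReal) h2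
  push_cast at h1c h2c
  field_simp
  linear_combination (-(wb : ℂ)) * h1c + (va : ℂ) * h2c

/-! ### The core Moyal bracket identity at the level of `Gf` integrals -/

theorem core_moyal {ε : ℝ} (hε : 0 < ε) (Q R : ℝ[X]) (n m : ℕ) (x p : ℝ)
    (hQ : ∀ t, ε ^ 2 * fQ ε (Qd ε (Qd ε Q)) t = (t ^ 2 - (2 * n + 1) * ε) * fQ ε Q t)
    (hR : ∀ t, ε ^ 2 * fQ ε (Qd ε (Qd ε R)) t = (t ^ 2 - (2 * m + 1) * ε) * fQ ε R t) :
    (p : ℂ) * (∫ y : ℝ, (Gf ε (Qd ε Q) R x p y + Gf ε Q (Qd ε R) x p y))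
      - (x : ℂ) * (∫ y : ℝ, (-Complex.I * y / ε) * Gf ε Q R x p y)
      = Complex.I * ((n : ℂ) - m) * ∫ y : ℝ, Gf ε Q R x p y := by
  have hεc : (ε : ℂ) ≠ 0 := Complex.ofReal_ne_zero.2 hε.ne'
  have i00 := integrable_Gf hε Q R x p
  have i10 := integrable_Gf hε (Qd ε Q) R x p
  have i01 := integrable_Gf hε Q (Qd ε R) x p
  have i20 := integrable_Gf hε (Qd ε (Qd ε Q)) R x p
  have i02 := integrable_Gf hε Q (Qd ε (Qd ε R)) x p
  have iy := integrable_mul_Gf hε Q R x p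
  -- E2 : rewrite momentum integrand
  have hE2fun : (fun y : ℝ => (-Complex.I * y / ε) * Gf ε Q R x p y)
      = fun y : ℝ => (-Complex.I / ε) * ((y : ℂ) * Gf ε Q R x p y) := by
    funext y; ring
  have hE2 : (∫ y : ℝ, (-Complex.I * y / ε) * Gf ε Q R x p y)
      = (-Complex.I / ε) * ∫ y : ℝ, (y : ℂ) * Gf ε Q R x p y := by
    rw [hE2fun, MeasureTheory.integral_const_mul]
  have hsum : (∫ y : ℝ, (Gf ε (Qd ε Q) R x p y + Gf ε Q (Qd ε R) x p y))
      = (∫ y : ℝ, Gf ε (Qd ε Q) R x p y) + ∫ y : ℝ, Gf ε Q (Qd ε R) x p y :=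
    MeasureTheory.integral_add i10 i01
  -- E3 : integration by parts
  have hE3 := ibp_eq_zero hε Q R x p
  rw [MeasureTheory.integral_add
      (f := fun y : ℝ => (-Complex.I * p / ε) * (Gf ε (Qd ε Q) R x p y + Gf ε Q (Qd ε R) x p y))
      (g := fun y : ℝ => (1 / 2 : ℂ) * Gf ε (Qd ε (Qd ε Q)) R x p y
        - (1 / 2 : ℂ) * Gf ε Q (Qd ε (Qd ε R)) x p y)
      ((i10.add i01).const_mul _) ((i20.const_mul _).sub (i02.const_mul _)),
    MeasureTheory.integral_const_mul, MeasureTheory.integral_add i10 i01,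
    MeasureTheory.integral_sub (i20.const_mul _) (i02.const_mul _),
    MeasureTheory.integral_const_mul, MeasureTheory.integral_const_mul] at hE3
  -- E4 : pointwise ODE identity, integrated
  have hpt : ∀ y : ℝ, (-Complex.I * ε / 2) * (Gf ε (Qd ε (Qd ε Q)) R x p y
        - Gf ε Q (Qd ε (Qd ε R)) x p y)
      + (Complex.I * x / ε) * ((y : ℂ) * Gf ε Q R x p y)
      = Complex.I * ((n : ℂ) - m) * Gf ε Q R x p y := by
    intro y
    have hsc := cx_ode (ε := ε) (x := x) (y := y) hε (hQ (x + y / 2)) (hR (x - y / 2))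
    calc (-Complex.I * ε / 2) * (Gf ε (Qd ε (Qd ε Q)) R x p y - Gf ε Q (Qd ε (Qd ε R)) x p y)
          + (Complex.I * x / ε) * ((y : ℂ) * Gf ε Q R x p y)
        = Kf ε p y * ((-Complex.I * ε / 2) * (((fQ ε (Qd ε (Qd ε Q)) (x + y / 2) : ℝ) : ℂ)
              * ((fQ ε R (x - y / 2) : ℝ) : ℂ)
            - ((fQ ε Q (x + y / 2) : ℝ) : ℂ) * ((fQ ε (Qd ε (Qd ε R)) (x - y / 2) : ℝ) : ℂ))
          + (Complex.I * x / ε) * ((y : ℂ) * (((fQ ε Q (x + y / 2) : ℝ) : ℂ)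
              * ((fQ ε R (x - y / 2) : ℝ) : ℂ)))) := by
          simp only [Gf]; ring
      _ = Kf ε p y * (Complex.I * ((n : ℂ) - m) * (((fQ ε Q (x + y / 2) : ℝ) : ℂ)
            * ((fQ ε R (x - y / 2) : ℝ) : ℂ))) := by rw [hsc]
      _ = Complex.I * ((n : ℂ) - m) * Gf ε Q R x p y := by simp only [Gf]; ring
  have hE4 : (-Complex.I * ε / 2) * ((∫ y : ℝ, Gf ε (Qd ε (Qd ε Q)) R x p y)
        - ∫ y : ℝ, Gf ε Q (Qd ε (Qd ε R)) x p y)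
      + (Complex.I * x / ε) * (∫ y : ℝ, (y : ℂ) * Gf ε Q R x p y)
      = Complex.I * ((n : ℂ) - m) * ∫ y : ℝ, Gf ε Q R x p y := by
    have h5 : (∫ y : ℝ, ((-Complex.I * ε / 2) * (Gf ε (Qd ε (Qd ε Q)) R x p y
          - Gf ε Q (Qd ε (Qd ε R)) x p y)
        + (Complex.I * x / ε) * ((y : ℂ) * Gf ε Q R x p y)))
        = ∫ y : ℝ, Complex.I * ((n : ℂ) - m) * Gf ε Q R x p y := by
      exact MeasureTheory.integral_congr_ae (Filter.Eventually.of_forall hpt)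
    rw [MeasureTheory.integral_add
      (f := fun y : ℝ => (-Complex.I * ε / 2) * (Gf ε (Qd ε (Qd ε Q)) R x p y
        - Gf ε Q (Qd ε (Qd ε R)) x p y))
      (g := fun y : ℝ => (Complex.I * x / ε) * ((y : ℂ) * Gf ε Q R x p y))
      ((i20.sub i02).const_mul _) (iy.const_mul _),
      MeasureTheory.integral_const_mul, MeasureTheory.integral_sub i20 i02,
      MeasureTheory.integral_const_mul, MeasureTheory.integral_const_mul] at h5
    exact h5
  have hee : (ε : ℂ) * (ε : ℂ)⁻¹ = 1 := mul_inv_cancel₀ hεc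
  rw [hsum, hE2]
  linear_combination (Complex.I * (ε : ℂ)) * hE3 + hE4
    + (-(p : ℂ) * ((∫ y : ℝ, Gf ε (Qd ε Q) R x p y) + ∫ y : ℝ, Gf ε Q (Qd ε R) x p y)) * hee
    + ((p : ℂ) * ((∫ y : ℝ, Gf ε (Qd ε Q) R x p y) + ∫ y : ℝ, Gf ε Q (Qd ε R) x p y)
        * (ε : ℂ) * (ε : ℂ)⁻¹) * Complex.I_sq


/-- The cross-Wigner transform `W_{nm} = W^ε_{v_mᵋ}[v_nᵋ]` of two Hermite functions
satisfies the Moyal (sine) bracket eigenvalue equation of the harmonic oscillator: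
`p ∂_x W_{nm} − x ∂_p W_{nm} = (i/ε)(E_nᵋ − E_mᵋ) W_{nm}` with `E_kᵋ = (k + 1/2)ε`. -/
theorem crossWigner_hermite_moyal_bracket_eigen (ε : ℝ) (hε : 0 < ε) (n m : ℕ) :
    ∀ x p : ℝ,
      (p : ℂ) * deriv (fun x' : ℝ =>
          crossWigner ε (fun t => (hermiteFun ε n t : ℂ))
            (fun t => (hermiteFun ε m t : ℂ)) x' p) x
        - (x : ℂ) * deriv (fun p' : ℝ =>
            crossWigner ε (fun t => (hermiteFun ε n t : ℂ))
              (fun t => (hermiteFun ε m t : ℂ)) x p') p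
      = (Complex.I / (ε : ℂ)) * ((((n : ℂ) + 1 / 2) * ε) - (((m : ℂ) + 1 / 2) * ε)) *
          crossWigner ε (fun t => (hermiteFun ε n t : ℂ))
            (fun t => (hermiteFun ε m t : ℂ)) x p := by
  intro x p
  have hεc : (ε : ℂ) ≠ 0 := Complex.ofReal_ne_zero.2 hε.ne'
  set c0 : ℂ := ((2 * Real.pi * ε : ℝ) : ℂ)⁻¹ with hc0
  have hrw : ∀ x' p' : ℝ,
      crossWigner ε (fun t => (hermiteFun ε n t : ℂ)) (fun t => (hermiteFun ε m t : ℂ)) x' p'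
        = c0 * ∫ y : ℝ, Gf ε (hermPoly ε n) (hermPoly ε m) x' p' y := by
    intro x' p'
    rw [crossWigner, hc0]
    congr 1
    refine congrArg _ (funext fun y => ?_)
    simp only [Gf, Kf, hermiteFun_eq_fQ, Complex.conj_ofReal]
  have hfx : (fun x' : ℝ => crossWigner ε (fun t => (hermiteFun ε n t : ℂ))
      (fun t => (hermiteFun ε m t : ℂ)) x' p)
      = fun x' : ℝ => c0 * ∫ y : ℝ, Gf ε (hermPoly ε n) (hermPoly ε m) x' p y :=
    funext fun x' => hrw x' p
  have hfp : (fun p' : ℝ => crossWigner ε (fun t => (hermiteFun ε n t : ℂ))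
      (fun t => (hermiteFun ε m t : ℂ)) x p')
      = fun p' : ℝ => c0 * ∫ y : ℝ, Gf ε (hermPoly ε n) (hermPoly ε m) x p' y :=
    funext fun p' => hrw x p'
  have hdx := ((hasDerivAt_integral_x hε (hermPoly ε n) (hermPoly ε m) x p).const_mul c0).deriv
  have hdp := ((hasDerivAt_integral_p hε (hermPoly ε n) (hermPoly ε m) x p).const_mul c0).deriv
  rw [hfx, hfp, hdx, hdp, hrw x p]
  have hcore := core_moyal hε (hermPoly ε n) (hermPoly ε m) n m x p
    (hermite_ode hε n) (hermite_ode hε m)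
  have hee : (ε : ℂ) * (ε : ℂ)⁻¹ = 1 := mul_inv_cancel₀ hεc
  linear_combination c0 * hcore
    + (-(Complex.I * ((n : ℂ) - m) * c0 * ∫ y : ℝ, Gf ε (hermPoly ε n) (hermPoly ε m) x p y)) * hee
end
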